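/- arXiv:1308.0401 — 4 statements merged into one kernel-verified Lean document; each statement's English description precedes it below -/
import Mathlib

section
/- Assume Hypothesis (*). Then every element of G fixes B and B' setwise; there is an integer ℓ ≥ 2 such that every N-orbit C on B' has size ℓ and any two distinct vertices in the same N-orbit on B' are at distance at least 4 in Γ; and each vertex x ∈ B is adjacent to exactly one vertex in each N-orbit on B', so every vertex of B has valency r. -/
open SimpleGraph

section Prelude

variable {V : Type*}

/-- `g` is an automorphism of the graph `Γ`. -/
def IsGraphAut (Γ : SimpleGraph V) (g : Equiv.Perm V) : Prop :=
  ∀ u v : V, Γ.Adj (g u) (g v) ↔ Γ.Adj u v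

/-- `(B | Bᶜ)` is an (ordered) bipartition of `Γ`: every edge joins `B` and `Bᶜ`. -/
def IsBipartition (Γ : SimpleGraph V) (B : Set V) : Prop :=
  ∀ u v : V, Γ.Adj u v → (u ∈ B ↔ v ∉ B)

/-- The orbit of `x` under a subgroup `N` of permutations of `V`. -/
def POrbit (N : Subgroup (Equiv.Perm V)) (x : V) : Set V :=
  {y | ∃ n ∈ N, n x = y}

/-- `Γ` is locally `(G,s)`-distance transitive: the diameter is at least `s` and for
every vertex `v` and every `1 ≤ i ≤ s` the stabiliser of `v` in `G` is transitive on
the set of vertices at distance `i` from `v`. -/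
def LocallyDistTrans (Γ : SimpleGraph V) (G : Subgroup (Equiv.Perm V)) (s : ℕ) : Prop :=
  s ≤ Γ.diam ∧
    ∀ (v x y : V) (i : ℕ), 1 ≤ i → i ≤ s → Γ.dist v x = i → Γ.dist v y = i →
      ∃ g ∈ G, g v = v ∧ g x = y

/-- `Γ`, bipartite with ordered bipartition `(B | Bᶜ)`, is `r`-starlike relative to `N`:
`N` leaves `B` invariant, is transitive on `B`, and has exactly `r` orbits on `Bᶜ`. -/
def IsStarlike (Γ : SimpleGraph V) (B : Set V) (N : Subgroup (Equiv.Perm V)) (r : ℕ) : Prop :=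
  (∀ n ∈ N, ∀ v : V, n v ∈ B ↔ v ∈ B) ∧
    (∀ x ∈ B, ∀ y ∈ B, ∃ n ∈ N, n x = y) ∧
    {S : Set V | ∃ x ∈ Bᶜ, S = POrbit N x}.ncard = r

/-- `G` is transitive on the set `S` of (ordered) pairs. -/
def PairTrans (G : Subgroup (Equiv.Perm V)) (S : Set (V × V)) : Prop :=
  ∀ p ∈ S, ∀ q ∈ S, ∃ g ∈ G, g p.1 = q.1 ∧ g p.2 = q.2

/-- The adjacency design of the bipartite graph `Γ` with ordered bipartition `(B | Bᶜ)`
(points `B`, blocks `Bᶜ`, incidence = adjacency) is `G`-pairwise transitive. -/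
def AdjPT (Γ : SimpleGraph V) (B : Set V) (G : Subgroup (Equiv.Perm V)) : Prop :=
  (∀ g ∈ G, ∀ v : V, g v ∈ B ↔ v ∈ B) ∧
  PairTrans G {p | p.1 ∈ B ∧ p.2 ∈ Bᶜ ∧ Γ.Adj p.1 p.2} ∧
  PairTrans G {p | p.1 ∈ B ∧ p.2 ∈ Bᶜ ∧ ¬ Γ.Adj p.1 p.2} ∧
  PairTrans G {p | p.1 ∈ B ∧ p.2 ∈ B ∧ p.1 ≠ p.2 ∧ ∃ b ∈ Bᶜ, Γ.Adj p.1 b ∧ Γ.Adj p.2 b} ∧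
  PairTrans G {p | p.1 ∈ B ∧ p.2 ∈ B ∧ p.1 ≠ p.2 ∧ ¬ ∃ b ∈ Bᶜ, Γ.Adj p.1 b ∧ Γ.Adj p.2 b} ∧
  PairTrans G {p | p.1 ∈ Bᶜ ∧ p.2 ∈ Bᶜ ∧ p.1 ≠ p.2 ∧ ∃ x ∈ B, Γ.Adj x p.1 ∧ Γ.Adj x p.2} ∧
  PairTrans G {p | p.1 ∈ Bᶜ ∧ p.2 ∈ Bᶜ ∧ p.1 ≠ p.2 ∧ ¬ ∃ x ∈ B, Γ.Adj x p.1 ∧ Γ.Adj x p.2}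

/-- The adjacency design of `Γ` (points `B`, blocks `Bᶜ`) is `N`-nicely affine:
`N` acts as automorphisms preserving the biparts, transitively on points, and there is a
constant `μ` such that distinct blocks in different `N`-orbits have exactly `μ` common
points, while distinct blocks in the same `N`-orbit have no common point. -/
def AdjNA (Γ : SimpleGraph V) (B : Set V) (N : Subgroup (Equiv.Perm V)) : Prop :=
  (∀ n ∈ N, ∀ v : V, n v ∈ B ↔ v ∈ B) ∧
  (∀ x ∈ B, ∀ y ∈ B, ∃ n ∈ N, n x = y) ∧
  ∃ μ : ℕ, ∀ b ∈ Bᶜ, ∀ b' ∈ Bᶜ, b ≠ b' →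
    ((b' ∈ POrbit N b → ¬ ∃ x, Γ.Adj x b ∧ Γ.Adj x b') ∧
     (b' ∉ POrbit N b → {x | Γ.Adj x b ∧ Γ.Adj x b'}.ncard = μ))

/-- The adjacency design of `Γ` (points `B`, blocks `Bᶜ`) is affine: the blocks can be
partitioned into parallel classes, and there is a positive constant `μ` such that blocks
in distinct parallel classes have exactly `μ` common points. -/
def AdjAffine (Γ : SimpleGraph V) (B : Set V) : Prop :=
  ∃ 𝓒 : Set (Set V), (∀ C ∈ 𝓒, C ⊆ Bᶜ) ∧ (∀ b ∈ Bᶜ, ∃! C, C ∈ 𝓒 ∧ b ∈ C) ∧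
    (∀ C ∈ 𝓒, ∀ x ∈ B, ∃! b, b ∈ C ∧ Γ.Adj x b) ∧
    ∃ μ : ℕ, 0 < μ ∧ ∀ C ∈ 𝓒, ∀ C' ∈ 𝓒, C ≠ C' → ∀ b ∈ C, ∀ b' ∈ C',
      {x | Γ.Adj x b ∧ Γ.Adj x b'}.ncard = μ

end Prelude

section DesignPrelude

variable {P L : Type*}

/-- The design `(P, L, I)` is `G`-pairwise transitive. -/
def DesignPT (I : P → L → Prop) (G : Type*) [Group G] [MulAction G P] [MulAction G L] :
    Prop :=
  (∀ (x : P) (b : L) (x' : P) (b' : L), I x b → I x' b' →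
      ∃ g : G, g • x = x' ∧ g • b = b') ∧
  (∀ (x : P) (b : L) (x' : P) (b' : L), ¬ I x b → ¬ I x' b' →
      ∃ g : G, g • x = x' ∧ g • b = b') ∧
  (∀ x y x' y' : P, x ≠ y → x' ≠ y' → (∃ b, I x b ∧ I y b) → (∃ b, I x' b ∧ I y' b) →
      ∃ g : G, g • x = x' ∧ g • y = y') ∧
  (∀ x y x' y' : P, x ≠ y → x' ≠ y' → ¬ (∃ b, I x b ∧ I y b) → ¬ (∃ b, I x' b ∧ I y' b) →
      ∃ g : G, g • x = x' ∧ g • y = y') ∧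
  (∀ b c b' c' : L, b ≠ c → b' ≠ c' → (∃ x, I x b ∧ I x c) → (∃ x, I x b' ∧ I x c') →
      ∃ g : G, g • b = b' ∧ g • c = c') ∧
  (∀ b c b' c' : L, b ≠ c → b' ≠ c' → ¬ (∃ x, I x b ∧ I x c) → ¬ (∃ x, I x b' ∧ I x c') →
      ∃ g : G, g • b = b' ∧ g • c = c')

/-- The design `(P, L, I)` is `N`-nicely affine for the subgroup `N` of `G`. -/
def DesignNA (I : P → L → Prop) (G : Type*) [Group G] [MulAction G P] [MulAction G L]
    (N : Subgroup G) : Prop :=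
  (∀ x y : P, ∃ n ∈ N, n • x = y) ∧
  ∃ μ : ℕ, ∀ b b' : L, b ≠ b' →
    (((∃ n ∈ N, n • b = b') → ¬ ∃ x, I x b ∧ I x b') ∧
     ((¬ ∃ n ∈ N, n • b = b') → {x | I x b ∧ I x b'}.ncard = μ))

/-- The incidence graph of the design `(P, L, I)`. -/
def DIncGraph (I : P → L → Prop) : SimpleGraph (P ⊕ L) :=
  SimpleGraph.fromRel (fun a b => ∃ x s, a = Sum.inl x ∧ b = Sum.inr s ∧ I x s)

end DesignPrelude

section SetDesign

variable {V : Type*}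

/-- Pairwise transitivity for a design whose points are the elements of `V`, whose
blocks are the members of `𝓑` (identified with their point-sets) and whose
incidence relation is membership; `G` is a group of permutations of `V`. -/
def SetPT (𝓑 : Set (Set V)) (G : Subgroup (Equiv.Perm V)) : Prop :=
  (∀ x : V, ∀ s ∈ 𝓑, ∀ x' : V, ∀ s' ∈ 𝓑, x ∈ s → x' ∈ s' →
      ∃ g ∈ G, g x = x' ∧ (fun z => g z) '' s = s') ∧
  (∀ x : V, ∀ s ∈ 𝓑, ∀ x' : V, ∀ s' ∈ 𝓑, x ∉ s → x' ∉ s' →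
      ∃ g ∈ G, g x = x' ∧ (fun z => g z) '' s = s') ∧
  (∀ x y x' y' : V, x ≠ y → x' ≠ y' → (∃ s ∈ 𝓑, x ∈ s ∧ y ∈ s) → (∃ s ∈ 𝓑, x' ∈ s ∧ y' ∈ s) →
      ∃ g ∈ G, g x = x' ∧ g y = y') ∧
  (∀ x y x' y' : V, x ≠ y → x' ≠ y' → ¬ (∃ s ∈ 𝓑, x ∈ s ∧ y ∈ s) → ¬ (∃ s ∈ 𝓑, x' ∈ s ∧ y' ∈ s) →
      ∃ g ∈ G, g x = x' ∧ g y = y') ∧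
  (∀ s ∈ 𝓑, ∀ t ∈ 𝓑, ∀ s' ∈ 𝓑, ∀ t' ∈ 𝓑, s ≠ t → s' ≠ t' →
      (s ∩ t).Nonempty → (s' ∩ t').Nonempty →
      ∃ g ∈ G, (fun z => g z) '' s = s' ∧ (fun z => g z) '' t = t') ∧
  (∀ s ∈ 𝓑, ∀ t ∈ 𝓑, ∀ s' ∈ 𝓑, ∀ t' ∈ 𝓑, s ≠ t → s' ≠ t' →
      s ∩ t = ∅ → s' ∩ t' = ∅ →
      ∃ g ∈ G, (fun z => g z) '' s = s' ∧ (fun z => g z) '' t = t')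

/-- Nice affineness for a design with point set `V`, blocks `𝓑` (point-sets) and
incidence given by membership, relative to a permutation group `N`. -/
def SetNA (𝓑 : Set (Set V)) (N : Subgroup (Equiv.Perm V)) : Prop :=
  (∀ x y : V, ∃ n ∈ N, n x = y) ∧
  (∀ n ∈ N, ∀ s ∈ 𝓑, (fun z => n z) '' s ∈ 𝓑) ∧
  ∃ μ : ℕ, ∀ s ∈ 𝓑, ∀ s' ∈ 𝓑, s ≠ s' →
    (((∃ n ∈ N, (fun z => n z) '' s = s') → s ∩ s' = ∅) ∧
     ((¬ ∃ n ∈ N, (fun z => n z) '' s = s') → (s ∩ s').ncard = μ))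

end SetDesign

section QuotientGraph

variable {V : Type*}

/-- The setoid on vertices whose classes are the `N`-orbits. -/
def orbitSetoid (N : Subgroup (Equiv.Perm V)) : Setoid V where
  r x y := ∃ n ∈ N, n x = y
  iseqv := by
    refine ⟨fun x => ⟨1, N.one_mem, rfl⟩, ?_, ?_⟩
    · rintro x y ⟨n, hn, rfl⟩
      exact ⟨n⁻¹, N.inv_mem hn, by simp⟩
    · rintro x y z ⟨n, hn, rfl⟩ ⟨m, hm, rfl⟩
      exact ⟨m * n, N.mul_mem hm hn, rfl⟩

/-- The normal quotient graph `Γ_N`: vertices are the `N`-orbits, two distinct orbits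
being adjacent iff some vertex of one is adjacent to some vertex of the other. -/
def quotGraph (Γ : SimpleGraph V) (N : Subgroup (Equiv.Perm V)) :
    SimpleGraph (Quotient (orbitSetoid N)) :=
  SimpleGraph.fromRel (fun a b => ∃ x y : V, Γ.Adj x y ∧
    Quotient.mk (orbitSetoid N) x = a ∧ Quotient.mk (orbitSetoid N) y = b)

end QuotientGraph

section Subdivision

variable {W : Type*}

/-- The subdivision graph `S(Σ)` of a graph `Σ`: vertices are `EΣ ⊕ VΣ`, an edge
being adjacent to its endpoints. -/
def SubdivisionGraph (Sg : SimpleGraph W) : SimpleGraph (↥Sg.edgeSet ⊕ W) :=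
  SimpleGraph.fromRel (fun a b => ∃ (e : Sg.edgeSet) (w : W),
    a = Sum.inl e ∧ b = Sum.inr w ∧ w ∈ (e : Sym2 W))

/-- The graph on `B'` in which two vertices are adjacent iff they are at distance `2`
in `Γ`. -/
def distTwoGraph (Γ : SimpleGraph W) (B' : Set W) : SimpleGraph ↥B' where
  Adj a b := Γ.dist ↑a ↑b = 2
  symm := by
    constructor
    intro a b h
    rwa [SimpleGraph.dist_comm]
  loopless := by
    constructor
    intro a h
    simp [SimpleGraph.dist_self] at h

/-- `f 0, f 1, …, f t` is a `t`-arc of `Sg`. -/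
def IsArcOf (Sg : SimpleGraph W) (t : ℕ) (f : ℕ → W) : Prop :=
  (∀ i : ℕ, i < t → Sg.Adj (f i) (f (i + 1))) ∧
  (∀ i : ℕ, 1 ≤ i → i + 1 ≤ t → f (i - 1) ≠ f (i + 1))

end Subdivision

section Aux

variable {V : Type*}

private def autHom {Γ : SimpleGraph V} (g : Equiv.Perm V) (hg : IsGraphAut Γ g) : Γ →g Γ where
  toFun := g
  map_rel' := fun h => (hg _ _).mpr h

private lemma isGraphAut_inv {Γ : SimpleGraph V} {g : Equiv.Perm V} (hg : IsGraphAut Γ g) :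
    IsGraphAut Γ g⁻¹ := by
  intro u v
  have := hg (g⁻¹ u) (g⁻¹ v)
  simpa using this.symm

private lemma dist_map_aut {Γ : SimpleGraph V} (hconn : Γ.Connected) {g : Equiv.Perm V}
    (hg : IsGraphAut Γ g) (u v : V) : Γ.dist (g u) (g v) = Γ.dist u v := by
  have key : ∀ (h : Equiv.Perm V), IsGraphAut Γ h → ∀ u v : V,
      Γ.dist (h u) (h v) ≤ Γ.dist u v := by
    intro h hh u v
    obtain ⟨p, hp⟩ := hconn.exists_walk_length_eq_dist u v
    calc Γ.dist (h u) (h v) ≤ (p.map (autHom h hh)).length := Γ.dist_le _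
      _ = Γ.dist u v := by rw [SimpleGraph.Walk.length_map, hp]
  refine le_antisymm (key g hg u v) ?_
  have := key g⁻¹ (isGraphAut_inv hg) (g u) (g v)
  simpa using this

private lemma walk_parity {Γ : SimpleGraph V} {B : Set V} (hbip : IsBipartition Γ B)
    {u v : V} (p : Γ.Walk u v) : ((u ∈ B) ↔ (v ∈ B)) ↔ Even p.length := by
  induction p with
  | nil => simp
  | @cons a w v h q ih =>
    rw [SimpleGraph.Walk.length_cons, Nat.even_add_one, ← ih]
    have := hbip a w h
    tauto

private lemma parity_dist {Γ : SimpleGraph V} {B : Set V} (hconn : Γ.Connected)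
    (hbip : IsBipartition Γ B) (u v : V) : ((u ∈ B) ↔ (v ∈ B)) ↔ Even (Γ.dist u v) := by
  obtain ⟨p, hp⟩ := hconn.exists_walk_length_eq_dist u v
  rw [← hp]
  exact walk_parity hbip p

private lemma mem_porbit_self (N : Subgroup (Equiv.Perm V)) (x : V) : x ∈ POrbit N x :=
  ⟨1, N.one_mem, rfl⟩

private lemma porbit_eq_of_mem {N : Subgroup (Equiv.Perm V)} {x y : V}
    (h : y ∈ POrbit N x) : POrbit N y = POrbit N x := by
  obtain ⟨n, hn, rfl⟩ := h
  ext z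
  constructor
  · rintro ⟨m, hm, rfl⟩
    exact ⟨m * n, N.mul_mem hm hn, rfl⟩
  · rintro ⟨m, hm, rfl⟩
    exact ⟨m * n⁻¹, N.mul_mem hm (N.inv_mem hn), by simp [Equiv.Perm.mul_apply]⟩

private lemma image_porbit {G N : Subgroup (Equiv.Perm V)}
    (hnorm : ∀ g ∈ G, ∀ n ∈ N, g * n * g⁻¹ ∈ N) {g : Equiv.Perm V} (hg : g ∈ G) (x : V) :
    (fun z => g z) '' POrbit N x = POrbit N (g x) := by
  ext z
  constructor
  · rintro ⟨_, ⟨n, hn, rfl⟩, rfl⟩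
    exact ⟨g * n * g⁻¹, hnorm g hg n hn, by simp [Equiv.Perm.mul_apply]⟩
  · rintro ⟨m, hm, rfl⟩
    refine ⟨(g⁻¹ * m * g) x, ⟨g⁻¹ * m * g, ?_, rfl⟩, by simp [Equiv.Perm.mul_apply]⟩
    have := hnorm g⁻¹ (G.inv_mem hg) m hm
    simpa using this

end Aux

/-- **Lemma `cor:star`**.  Under Hypothesis (*) — `Γ` a finite connected bipartite graph
with ordered bipartition `(B|Bᶜ)`, not complete bipartite, `r, s ≥ 2`, `Γ` `r`-starlike
relative to `N`, locally `(G,s)`-distance transitive, `1 ≠ N ⊴ G ≤ Aut Γ` — every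
element of `G` fixes the biparts setwise, there is `ℓ ≥ 2` such that every `N`-orbit on
`Bᶜ` has size `ℓ` and distinct vertices in a common `N`-orbit on `Bᶜ` are at distance at
least `4`; moreover every `x ∈ B` has exactly one neighbour in each `N`-orbit on `Bᶜ`,
so every vertex of `B` has valency `r`. -/
theorem statement11 {V : Type*} [Fintype V] (Γ : SimpleGraph V) (B : Set V)
    (hconn : Γ.Connected) (hbip : IsBipartition Γ B)
    (hncb : ¬ ∀ x ∈ B, ∀ y ∈ Bᶜ, Γ.Adj x y)
    (G N : Subgroup (Equiv.Perm V)) (hGaut : ∀ g ∈ G, IsGraphAut Γ g)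
    (hNG : N ≤ G) (hN1 : N ≠ ⊥) (hnorm : ∀ g ∈ G, ∀ n ∈ N, g * n * g⁻¹ ∈ N)
    (r s : ℕ) (hr : 2 ≤ r) (hs : 2 ≤ s)
    (hstar : IsStarlike Γ B N r) (hldt : LocallyDistTrans Γ G s) :
    (∀ g ∈ G, ∀ v : V, g v ∈ B ↔ v ∈ B) ∧
    ∃ ℓ : ℕ, 2 ≤ ℓ ∧
      (∀ x ∈ Bᶜ, (POrbit N x).ncard = ℓ) ∧
      (∀ x ∈ Bᶜ, ∀ y ∈ POrbit N x, x ≠ y → 4 ≤ Γ.dist x y) ∧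
      (∀ x ∈ B, ∀ b ∈ Bᶜ, ∃! y : V, y ∈ POrbit N b ∧ Γ.Adj x y) ∧
      (∀ x ∈ B, (Γ.neighborSet x).ncard = r) := by
  obtain ⟨hNB, hNtransB, hOrb⟩ := hstar
  -- basic facts
  have hOrbBc : ∀ x : V, x ∉ B → ∀ y ∈ POrbit N x, y ∉ B := by
    rintro x hx y ⟨n, hn, rfl⟩
    exact fun h => hx ((hNB n hn x).mp h)
  have h2elts : ∃ z₁ z₂ : V, z₁ ≠ z₂ := by
    have h1 : 1 < {S : Set V | ∃ x ∈ Bᶜ, S = POrbit N x}.ncard := by omega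
    obtain ⟨S, hS, T, hT, hST⟩ := (Set.one_lt_ncard (Set.toFinite _)).mp h1
    obtain ⟨z₁, hz₁, rfl⟩ := hS
    obtain ⟨z₂, hz₂, rfl⟩ := hT
    exact ⟨z₁, z₂, fun h => hST (by rw [h])⟩
  have hnbr : ∀ v : V, ∃ u, Γ.Adj v u := by
    intro v
    obtain ⟨z₁, z₂, hz⟩ := h2elts
    have hw : ∃ w : V, w ≠ v := by
      rcases eq_or_ne z₁ v with rfl | h
      · exact ⟨z₂, fun e => hz e.symm⟩
      · exact ⟨z₁, h⟩
    obtain ⟨w, hw⟩ := hw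
    obtain ⟨p⟩ := hconn v w
    cases p with
    | nil => exact absurd rfl hw
    | cons h q => exact ⟨_, h⟩
  have hBcne : ∃ z : V, z ∉ B := by
    have h1 : {S : Set V | ∃ x ∈ Bᶜ, S = POrbit N x}.Nonempty := by
      apply Set.nonempty_of_ncard_ne_zero; omega
    obtain ⟨S, z, hz, rfl⟩ := h1
    exact ⟨z, hz⟩
  have hBne : ∃ x : V, x ∈ B := by
    obtain ⟨z, hz⟩ := hBcne
    obtain ⟨u, hu⟩ := hnbr z
    have := hbip z u hu
    exact ⟨u, by tauto⟩
  obtain ⟨x₀, hx₀⟩ := hBne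
  -- Part 1 : G preserves B
  have keyB : ∀ g ∈ G, ∀ u v : V, ((g u ∈ B) ↔ (g v ∈ B)) ↔ ((u ∈ B) ↔ (v ∈ B)) := by
    intro g hg u v
    obtain ⟨p, hp⟩ := hconn.exists_walk_length_eq_dist u v
    have h1 := walk_parity hbip p
    have h2 := walk_parity hbip (p.map (autHom g (hGaut g hg)))
    rw [SimpleGraph.Walk.length_map] at h2
    rw [h1]
    exact h2
  have hGB : ∀ g ∈ G, ∀ v : V, g v ∈ B ↔ v ∈ B := by
    intro g hg v
    by_cases hgx : g x₀ ∈ B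
    · have := keyB g hg v x₀
      tauto
    · exfalso
      have hswap : ∀ w : V, g w ∈ B ↔ w ∉ B := by
        intro w
        have := keyB g hg w x₀
        tauto
      have hBorb : B = POrbit N x₀ := by
        ext z
        constructor
        · intro hz
          obtain ⟨n, hn, hnz⟩ := hNtransB x₀ hx₀ z hz
          exact ⟨n, hn, hnz⟩
        · rintro ⟨n, hn, rfl⟩
          exact (hNB n hn x₀).mpr hx₀
      have himg : (fun z => g z) '' B = Bᶜ := by
        ext z
        simp only [Set.mem_image, Set.mem_compl_iff]
        constructor
        · rintro ⟨w, hw, rfl⟩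
          exact fun h => ((hswap w).mp h) hw
        · intro hz
          refine ⟨g⁻¹ z, ?_, by simp⟩
          have := hswap (g⁻¹ z)
          rw [show g (g⁻¹ z) = z by simp] at this
          tauto
      have hBc : Bᶜ = POrbit N (g x₀) := by
        rw [← himg, hBorb, image_porbit hnorm hg x₀]
      have hone : {S : Set V | ∃ x ∈ Bᶜ, S = POrbit N x} = {POrbit N (g x₀)} := by
        ext S
        simp only [Set.mem_setOf_eq, Set.mem_singleton_iff]
        constructor
        · rintro ⟨x, hx, rfl⟩
          rw [hBc] at hx
          exact porbit_eq_of_mem hx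
        · rintro rfl
          exact ⟨g x₀, by rw [hBc]; exact mem_porbit_self N _, rfl⟩
      rw [hone, Set.ncard_singleton] at hOrb
      omega
  -- the key lemma : no two distinct vertices of the same N-orbit on Bᶜ are at distance 2
  have hkey2 : ∀ b : V, b ∉ B → ∀ b' ∈ POrbit N b, b ≠ b' → Γ.dist b b' ≠ 2 := by
    intro b hb b' hb' hne hd2
    have hA : ∀ c z : V, c ∈ POrbit N b → Γ.dist c z = 2 → z ∈ POrbit N b := by
      rintro c z hc hdz
      obtain ⟨n, hn, rfl⟩ := hc
      have hnG := hNG hn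
      have hd : Γ.dist (n b) (n b') = 2 := by
        rw [dist_map_aut hconn (hGaut n hnG)]; exact hd2
      obtain ⟨g, hg, hgc, hgz⟩ := hldt.2 (n b) (n b') z 2 (by norm_num) hs hd hdz
      have himg : (fun w => g w) '' POrbit N (n b) = POrbit N (n b) := by
        rw [image_porbit hnorm hg, hgc]
      have hnb' : n b' ∈ POrbit N (n b) := by
        rw [porbit_eq_of_mem (⟨n, hn, rfl⟩ : n b ∈ POrbit N b), ← porbit_eq_of_mem hb']
        exact ⟨n, hn, rfl⟩
      have hz : z ∈ POrbit N (n b) := by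
        rw [← himg]
        exact ⟨n b', hnb', hgz⟩
      rwa [porbit_eq_of_mem (⟨n, hn, rfl⟩ : n b ∈ POrbit N b)] at hz
    have keyWalk : ∀ m : ℕ, ∀ c y : V, c ∈ POrbit N b → y ∉ B →
        ∀ p : Γ.Walk c y, p.length = m → y ∈ POrbit N b := by
      intro m
      induction m using Nat.strong_induction_on with
      | _ m ih =>
        intro c y hc hy p hp
        cases p with
        | nil => exact hc
        | @cons _ w _ h q =>
          have hcB : c ∉ B := hOrbBc b hb c hc
          have hwB : w ∈ B := by
            have := hbip c w h
            tauto
          cases q with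
          | nil => exact absurd hwB hy
          | @cons _ w' _ h' q' =>
            have hw'B : w' ∉ B := by
              have := hbip w w' h'
              tauto
            have hle : Γ.dist c w' ≤ 2 := by
              have := Γ.dist_le (SimpleGraph.Walk.cons h (SimpleGraph.Walk.cons h'
                SimpleGraph.Walk.nil))
              simpa using this
            have heven : Even (Γ.dist c w') := by
              rw [← parity_dist hconn hbip]
              tauto
            have hw'orb : w' ∈ POrbit N b := by
              obtain ⟨k, hk⟩ := heven
              have h02 : Γ.dist c w' = 0 ∨ Γ.dist c w' = 2 := by omega
              rcases h02 with h0 | h2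
              · have : c = w' := (hconn.dist_eq_zero_iff).mp h0
                exact this ▸ hc
              · exact hA c w' hc h2
            simp only [SimpleGraph.Walk.length_cons] at hp
            exact ih q'.length (by omega) w' y hw'orb hy q' rfl
    have hsub : ∀ y : V, y ∉ B → y ∈ POrbit N b := by
      intro y hy
      obtain ⟨p⟩ := hconn b y
      exact keyWalk p.length b y (mem_porbit_self N b) hy p rfl
    have hone : {S : Set V | ∃ x ∈ Bᶜ, S = POrbit N x} = {POrbit N b} := by
      ext S
      simp only [Set.mem_setOf_eq, Set.mem_singleton_iff, Set.mem_compl_iff]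
      constructor
      · rintro ⟨x, hx, rfl⟩
        exact porbit_eq_of_mem (hsub x hx)
      · rintro rfl
        exact ⟨b, hb, rfl⟩
    rw [hone, Set.ncard_singleton] at hOrb
    omega
  -- existence and uniqueness of a neighbour in each orbit
  have hexu : ∀ x ∈ B, ∀ b : V, b ∉ B → ∃! y, y ∈ POrbit N b ∧ Γ.Adj x y := by
    intro x hx b hb
    obtain ⟨w, hw⟩ := hnbr b
    have hwB : w ∈ B := by
      have := hbip b w hw
      tauto
    obtain ⟨n, hn, hnw⟩ := hNtransB w hwB x hx
    have hadj : Γ.Adj x (n b) := by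
      have := (hGaut n (hNG hn)) w b
      rw [hnw] at this
      exact this.mpr hw.symm
    refine ⟨n b, ⟨⟨n, hn, rfl⟩, hadj⟩, ?_⟩
    rintro y ⟨hy, hxy⟩
    by_contra hne
    have hyBc : y ∉ B := hOrbBc b hb y hy
    have hnbBc : (n : Equiv.Perm V) b ∉ B := hOrbBc b hb (n b) ⟨n, hn, rfl⟩
    have hd : Γ.dist y (n b) = 2 := by
      have hle : Γ.dist y (n b) ≤ 2 := by
        have := Γ.dist_le (SimpleGraph.Walk.cons hxy.symm (SimpleGraph.Walk.cons hadj
          SimpleGraph.Walk.nil))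
        simpa using this
      have hpos := hconn.pos_dist_of_ne hne
      have hne1 : Γ.dist y (n b) ≠ 1 := by
        intro h1
        have hadj' := SimpleGraph.dist_eq_one_iff_adj.mp h1
        have := hbip y (n b) hadj'
        tauto
      omega
    have hmem : (n : Equiv.Perm V) b ∈ POrbit N y := by
      rw [porbit_eq_of_mem hy]
      exact ⟨n, hn, rfl⟩
    exact hkey2 y hyBc (n b) hmem hne hd
  -- all N-orbits on Bᶜ have the same size
  have hsame : ∀ b : V, b ∉ B → ∀ b' : V, b' ∉ B →
      (POrbit N b).ncard = (POrbit N b').ncard := by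
    intro b hb b' hb'
    obtain ⟨c, ⟨hcOrb, hcAdj⟩, -⟩ := hexu x₀ hx₀ b hb
    obtain ⟨c', ⟨hcOrb', hcAdj'⟩, -⟩ := hexu x₀ hx₀ b' hb'
    have hd1 : Γ.dist x₀ c = 1 := SimpleGraph.dist_eq_one_iff_adj.mpr hcAdj
    have hd1' : Γ.dist x₀ c' = 1 := SimpleGraph.dist_eq_one_iff_adj.mpr hcAdj'
    obtain ⟨g, hg, hgx, hgc⟩ := hldt.2 x₀ c c' 1 le_rfl (by omega) hd1 hd1'
    have himg : (fun z => g z) '' POrbit N c = POrbit N c' := by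
      rw [image_porbit hnorm hg, hgc]
    calc (POrbit N b).ncard = (POrbit N c).ncard := by rw [porbit_eq_of_mem hcOrb]
      _ = ((fun z => g z) '' POrbit N c).ncard :=
          (Set.ncard_image_of_injective _ g.injective).symm
      _ = (POrbit N c').ncard := by rw [himg]
      _ = (POrbit N b').ncard := by rw [porbit_eq_of_mem hcOrb']
  obtain ⟨b₀, hb₀⟩ := hBcne
  -- the common size is at least 2
  have hl2 : 2 ≤ (POrbit N b₀).ncard := by
    by_contra hlt
    have hpos : 1 ≤ (POrbit N b₀).ncard := by
      have : (POrbit N b₀).Nonempty := ⟨b₀, mem_porbit_self N b₀⟩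
      have := (Set.ncard_pos (Set.toFinite _)).mpr this
      omega
    have hone : (POrbit N b₀).ncard = 1 := by omega
    apply hncb
    intro x hx y hy
    have hyB : y ∉ B := hy
    have h1 : (POrbit N y).ncard = 1 := by rw [hsame y hyB b₀ hb₀]; exact hone
    obtain ⟨a, ha⟩ := Set.ncard_eq_one.mp h1
    have hya : y = a := by
      have := mem_porbit_self N y
      rw [ha] at this
      exact this
    obtain ⟨c, ⟨hcOrb, hcAdj⟩, -⟩ := hexu x hx y hyB
    have : c = a := by rw [ha] at hcOrb; exact hcOrb
    rw [hya, ← this]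
    exact hcAdj
  refine ⟨hGB, (POrbit N b₀).ncard, hl2, ?_, ?_, ?_, ?_⟩
  · intro x hx
    exact hsame x hx b₀ hb₀
  · intro x hx y hy hne
    have hyB : y ∉ B := hOrbBc x hx y hy
    have heven : Even (Γ.dist x y) := by
      rw [← parity_dist hconn hbip]
      constructor <;> intro h <;> [exact absurd h hx; exact absurd h hyB]
    have hpos := hconn.pos_dist_of_ne hne
    have hne2 := hkey2 x hx y hy hne
    obtain ⟨k, hk⟩ := heven
    omega
  · intro x hx b hb
    exact hexu x hx b hb
  · intro x hx
    have hinj : Set.InjOn (fun y => POrbit N y) (Γ.neighborSet x) := by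
      intro y hy y' hy' he
      have hyadj : Γ.Adj x y := hy
      have hy'adj : Γ.Adj x y' := hy'
      have hyBc : y ∉ B := by
        have := hbip x y hyadj
        tauto
      obtain ⟨z, hz, huniq⟩ := hexu x hx y hyBc
      have e1 := huniq y ⟨mem_porbit_self N y, hyadj⟩
      have e2 := huniq y' ⟨by simp only at he; rw [he]; exact mem_porbit_self N y', hy'adj⟩
      rw [e1, e2]
    have himg : (fun y => POrbit N y) '' (Γ.neighborSet x)
        = {S : Set V | ∃ z ∈ Bᶜ, S = POrbit N z} := by
      ext S
      simp only [Set.mem_image, Set.mem_setOf_eq, Set.mem_compl_iff]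
      constructor
      · rintro ⟨y, hy, rfl⟩
        have hyadj : Γ.Adj x y := hy
        refine ⟨y, ?_, rfl⟩
        have := hbip x y hyadj
        tauto
      · rintro ⟨z, hz, rfl⟩
        obtain ⟨y, ⟨hyO, hyA⟩, -⟩ := hexu x hx z hz
        exact ⟨y, hyA, porbit_eq_of_mem hyO⟩
    calc (Γ.neighborSet x).ncard
        = ((fun y => POrbit N y) '' (Γ.neighborSet x)).ncard :=
          (Set.ncard_image_of_injOn hinj).symm
      _ = r := by rw [himg]; exact hOrb
end

section
/- Assume Hypothesis (*) with r ≥ 3. Then s ≤ 4. Moreover, if s = 4 then the adjacency design D(Γ) is N-nicely affine with r parallel classes of blocks (the N-orbits on B'), and the diameter of Γ is exactly 4. -/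
open SimpleGraph

/-- **Proposition `prop:affine`**.  Under Hypothesis (*) with `r ≥ 3`, we have `s ≤ 4`;
moreover if `s = 4` then the adjacency design `D(Γ)` is `N`-nicely affine with `r`
parallel classes of blocks (the `N`-orbits on `Bᶜ`), and `Γ` has diameter exactly `4`. -/
theorem statement13 {V : Type*} [Fintype V] (Γ : SimpleGraph V) (B : Set V)
    (hconn : Γ.Connected) (hbip : IsBipartition Γ B)
    (hncb : ¬ ∀ x ∈ B, ∀ y ∈ Bᶜ, Γ.Adj x y)
    (G N : Subgroup (Equiv.Perm V)) (hGaut : ∀ g ∈ G, IsGraphAut Γ g)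
    (hNG : N ≤ G) (hN1 : N ≠ ⊥) (hnorm : ∀ g ∈ G, ∀ n ∈ N, g * n * g⁻¹ ∈ N)
    (r s : ℕ) (hr : 3 ≤ r) (hs : 2 ≤ s)
    (hstar : IsStarlike Γ B N r) (hldt : LocallyDistTrans Γ G s) :
    s ≤ 4 ∧
    (s = 4 →
      AdjNA Γ B N ∧
      {S : Set V | ∃ x ∈ Bᶜ, S = POrbit N x}.ncard = r ∧
      Γ.diam = 4) := by
    classical
  obtain ⟨hNB, hNtrans, hNorbs⟩ := hstar
  obtain ⟨hsdiam, htrans⟩ := hldt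
  -- distances are preserved by automorphisms in G
  have hdist_le : ∀ g ∈ G, ∀ u v : V, Γ.dist (g u) (g v) ≤ Γ.dist u v := by
    intro g hg u v
    obtain ⟨p, hp⟩ := hconn.exists_walk_length_eq_dist u v
    have := SimpleGraph.dist_le
      (p.map ⟨(g : V → V), fun {a b} h => (hGaut g hg a b).mpr h⟩)
    rwa [SimpleGraph.Walk.length_map, hp] at this
  have hdistg : ∀ g ∈ G, ∀ u v : V, Γ.dist (g u) (g v) = Γ.dist u v := by
    intro g hg u v
    refine le_antisymm (hdist_le g hg u v) ?_
    have h2 := hdist_le g⁻¹ (G.inv_mem hg) (g u) (g v)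
    simpa using h2
  -- orbit basics
  have horb_self : ∀ x : V, x ∈ POrbit N x := fun x => ⟨1, N.one_mem, by simp⟩
  have horb_eq : ∀ x y : V, y ∈ POrbit N x → POrbit N x = POrbit N y := by
    rintro x y ⟨n, hn, rfl⟩
    ext z
    constructor
    · rintro ⟨m, hm, rfl⟩
      exact ⟨m * n⁻¹, N.mul_mem hm (N.inv_mem hn), by simp [Equiv.Perm.mul_apply]⟩
    · rintro ⟨m, hm, rfl⟩
      exact ⟨m * n, N.mul_mem hm hn, by simp [Equiv.Perm.mul_apply]⟩
  have horb_g : ∀ g ∈ G, ∀ x y : V, y ∈ POrbit N x → g y ∈ POrbit N (g x) := by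
    rintro g hg x y ⟨n, hn, rfl⟩
    exact ⟨g * n * g⁻¹, hnorm g hg n hn, by simp [Equiv.Perm.mul_apply]⟩
  have horb_compl : ∀ x : V, ∀ y ∈ POrbit N x, x ∈ Bᶜ → y ∈ Bᶜ := by
    rintro x y ⟨n, hn, rfl⟩ hx
    simp only [Set.mem_compl_iff] at hx ⊢
    exact fun h => hx ((hNB n hn x).mp h)
  -- parity along walks
  have hwalkpar : ∀ (u v : V) (p : Γ.Walk u v), ((u ∈ B) ↔ (v ∈ B)) ↔ Even p.length := by
    intro u v p
    induction p with
    | nil => simp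
    | @cons u w v h q ih =>
      have hb := hbip u w h
      rw [SimpleGraph.Walk.length_cons, Nat.even_add_one, ← ih]
      by_cases hu : u ∈ B <;> by_cases hw : w ∈ B <;> by_cases hv : v ∈ B <;> tauto
  have hpar : ∀ u v : V, ((u ∈ B) ↔ (v ∈ B)) ↔ Even (Γ.dist u v) := by
    intro u v
    obtain ⟨p, hp⟩ := hconn.exists_walk_length_eq_dist u v
    rw [← hp]; exact hwalkpar u v p
  -- nontriviality and neighbours
  have hnontriv : Nontrivial V := by
    rcases subsingleton_or_nontrivial V with h | h
    · exfalso
      have hd0 : Γ.diam = 0 := by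
        have : Γ.ediam = 0 := SimpleGraph.ediam_eq_zero_of_subsingleton
        simp [SimpleGraph.diam, this]
      omega
    · exact h
  have hnbr : ∀ v : V, ∃ u, Γ.Adj v u := by
    intro v
    haveI := hnontriv
    obtain ⟨u, hu⟩ := exists_ne v
    obtain ⟨p⟩ := hconn.preconnected v u
    cases p with
    | nil => exact absurd rfl hu
    | cons h q => exact ⟨_, h⟩
  have hsideB : ∀ u v : V, Γ.Adj u v → u ∈ Bᶜ → v ∈ B := by
    intro u v h hu
    have := hbip u v h
    simp only [Set.mem_compl_iff] at hu
    tauto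
  have hsideBc : ∀ u v : V, Γ.Adj u v → u ∈ B → v ∈ Bᶜ := by
    intro u v h hu
    have := hbip u v h
    simp only [Set.mem_compl_iff]
    tauto
  -- F1 : every point is incident with a block in every orbit
  have hF1 : ∀ v ∈ B, ∀ c ∈ Bᶜ, ∃ y, Γ.Adj v y ∧ y ∈ POrbit N c := by
    intro v hv c hc
    obtain ⟨x, hx⟩ := hnbr c
    have hxB : x ∈ B := hsideB c x hx hc
    obtain ⟨n, hn, hnx⟩ := hNtrans x hxB v hv
    refine ⟨n c, ?_, ⟨n, hn, rfl⟩⟩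
    have := (hGaut n (hNG hn) x c).mpr hx.symm
    rwa [hnx] at this
  -- distance two via common neighbour
  have hdist2 : ∀ b c : V, b ∈ Bᶜ → c ∈ Bᶜ → b ≠ c →
      (∃ x, Γ.Adj x b ∧ Γ.Adj x c) → Γ.dist b c = 2 := by
    rintro b c hb hc hne ⟨x, hxb, hxc⟩
    have ht : Γ.dist b c ≤ Γ.dist b x + Γ.dist x c := hconn.dist_triangle
    have h1 : Γ.dist b x = 1 := SimpleGraph.dist_eq_one_iff_adj.mpr hxb.symm
    have h2 : Γ.dist x c = 1 := SimpleGraph.dist_eq_one_iff_adj.mpr hxc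
    have hev : Even (Γ.dist b c) := by
      refine (hpar b c).mp ?_
      simp only [Set.mem_compl_iff] at hb hc
      tauto
    have hzero : Γ.dist b c ≠ 0 := fun h0 => hne (hconn.dist_eq_zero_iff.mp h0)
    rw [Nat.even_iff] at hev
    omega
  -- at least three orbits
  have horbs3 : ∀ a b : V, ∃ c ∈ Bᶜ, POrbit N c ≠ POrbit N a ∧ POrbit N c ≠ POrbit N b := by
    intro a b
    by_contra hcon
    push_neg at hcon
    have hsub : {S : Set V | ∃ x ∈ Bᶜ, S = POrbit N x} ⊆
        {POrbit N a, POrbit N b} := by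
      rintro S ⟨x, hx, rfl⟩
      by_cases h : POrbit N x = POrbit N a
      · exact Set.mem_insert_iff.mpr (Or.inl h)
      · exact Set.mem_insert_iff.mpr (Or.inr (hcon x hx h))
    have hle := Set.ncard_le_ncard hsub ((Set.finite_singleton _).insert _)
    rw [hNorbs] at hle
    have h2 : ({POrbit N a, POrbit N b} : Set (Set V)).ncard ≤ 2 := by
      refine le_trans (Set.ncard_insert_le _ _) ?_
      simp [Set.ncard_singleton]
    omega
  -- Claim 1: blocks in the same orbit have no common point
  have hsame_no2 : ∀ b ∈ Bᶜ, ∀ c, c ∈ POrbit N b → Γ.dist b c = 2 → False := by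
    intro b hb c hcorb hd
    have hc : c ∈ Bᶜ := horb_compl b c hcorb hb
    obtain ⟨p, hp⟩ := hconn.exists_walk_length_eq_dist b c
    have hL : p.length = 2 := hp.trans hd
    set x := p.getVert 1 with hxdef
    have hbx : Γ.Adj b x := by
      have := p.adj_getVert_succ (i := 0) (by omega)
      rwa [p.getVert_zero] at this
    have hxc : Γ.Adj x c := by
      have := p.adj_getVert_succ (i := 1) (by omega)
      rwa [show p.getVert 2 = c from by rw [← hL]; exact p.getVert_length] at this
    have hxB : x ∈ B := hsideB b x hbx hb
    obtain ⟨c', hc', hc'a, -⟩ := horbs3 b b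
    obtain ⟨y, hxy, hyorb⟩ := hF1 x hxB c' hc'
    have hyc : y ∈ Bᶜ := horb_compl c' y hyorb hc'
    have hbny : b ≠ y := by
      rintro rfl
      exact hc'a (horb_eq c' b hyorb)
    have hdby : Γ.dist b y = 2 := hdist2 b y hb hyc hbny ⟨x, hbx.symm, hxy⟩
    obtain ⟨g, hg, hgb, hgc⟩ := htrans b c y 2 (by omega) hs hd hdby
    have hmem : g c ∈ POrbit N (g b) := horb_g g hg b c hcorb
    rw [hgb, hgc] at hmem
    have h1 := horb_eq b y hmem
    have h2 := horb_eq c' y hyorb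
    exact hc'a (h2.trans h1.symm)
  -- distances between vertices of a walk
  have hgv : ∀ (u v : V) (p : Γ.Walk u v) (j k : ℕ), j ≤ k →
      Γ.dist (p.getVert j) (p.getVert k) ≤ k - j := by
    intro u v p
    induction p with
    | nil =>
      intro j k _
      simp [SimpleGraph.Walk.getVert, SimpleGraph.dist_self]
    | @cons u w v h q ih =>
      intro j k hjk
      cases j with
      | zero =>
        cases k with
        | zero => simp
        | succ k =>
          rw [SimpleGraph.Walk.getVert_zero, SimpleGraph.Walk.getVert_cons_succ]
          have h1 : Γ.dist u w = 1 := SimpleGraph.dist_eq_one_iff_adj.mpr h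
          have h2 := ih 0 k (Nat.zero_le k)
          rw [SimpleGraph.Walk.getVert_zero] at h2
          have h3 : Γ.dist u (q.getVert k) ≤ Γ.dist u w + Γ.dist w (q.getVert k) :=
            hconn.dist_triangle
          omega
      | succ j =>
        cases k with
        | zero => omega
        | succ k =>
          rw [SimpleGraph.Walk.getVert_cons_succ, SimpleGraph.Walk.getVert_cons_succ]
          have := ih j k (by omega)
          simpa [Nat.succ_sub_succ] using this
  have hgeo : ∀ (u v : V) (p : Γ.Walk u v), p.length = Γ.dist u v → ∀ j k, j ≤ k →
      k ≤ p.length → Γ.dist (p.getVert j) (p.getVert k) = k - j := by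
    intro u v p hp j k hjk hk
    have h1 := hgv u v p 0 j (Nat.zero_le j)
    have h2 := hgv u v p j k hjk
    have h3 := hgv u v p k p.length hk
    rw [SimpleGraph.Walk.getVert_zero] at h1
    rw [SimpleGraph.Walk.getVert_length] at h3
    have t1 : Γ.dist u v ≤ Γ.dist u (p.getVert j) + Γ.dist (p.getVert j) v :=
      hconn.dist_triangle
    have t2 : Γ.dist (p.getVert j) v ≤
        Γ.dist (p.getVert j) (p.getVert k) + Γ.dist (p.getVert k) v :=
      hconn.dist_triangle
    omega
  -- orbit-spreading of distance sets (Lemma M)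
  have hM : ∀ x ∈ B, ∀ (i : ℕ) (w : V), Γ.dist x w = i → w ∈ Bᶜ → ∀ c ∈ Bᶜ,
      ∃ e, Γ.dist x e = i ∧ e ∈ POrbit N c ∧ e ∈ Bᶜ := by
    intro x hx i w hw hwC c hc
    obtain ⟨yw, hxyw, hyworb⟩ := hF1 x hx w hwC
    obtain ⟨yc, hxyc, hycorb⟩ := hF1 x hx c hc
    have d1 : Γ.dist x yw = 1 := SimpleGraph.dist_eq_one_iff_adj.mpr hxyw
    have d2 : Γ.dist x yc = 1 := SimpleGraph.dist_eq_one_iff_adj.mpr hxyc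
    obtain ⟨g, hg, hgx, hgy⟩ := htrans x yw yc 1 le_rfl (by omega) d1 d2
    have hdge : Γ.dist x (g w) = i := by
      calc Γ.dist x (g w) = Γ.dist (g x) (g w) := by rw [hgx]
        _ = Γ.dist x w := hdistg g hg x w
        _ = i := hw
    have hwyw : w ∈ POrbit N yw := by
      rw [← horb_eq w yw hyworb]; exact horb_self w
    have hgworb : g w ∈ POrbit N yc := by
      have := horb_g g hg yw w hwyw
      rwa [hgy] at this
    have hgwc : g w ∈ POrbit N c := by
      rw [horb_eq c yc hycorb]; exact hgworb
    exact ⟨g w, hdge, hgwc, horb_compl c (g w) hgwc hc⟩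
  -- Sublemma S : no cross-orbit pairs at distance 4
  have hS : 4 ≤ s → ∀ b w : V, b ∈ Bᶜ → w ∈ Bᶜ → Γ.dist b w = 4 → w ∈ POrbit N b := by
    intro hs4 b w hb hw hd
    by_contra hnw
    obtain ⟨p, hp⟩ := hconn.exists_walk_length_eq_dist b w
    have hL : p.length = 4 := hp.trans hd
    set x := p.getVert 1 with hxdef
    have hbx : Γ.Adj b x := by
      have := p.adj_getVert_succ (i := 0) (by omega)
      rwa [p.getVert_zero] at this
    have hxB : x ∈ B := hsideB b x hbx hb
    have hxw : Γ.dist x w = 3 := by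
      have := hgeo b w p hp 1 4 (by omega) (by omega)
      rwa [show p.getVert 4 = w from by rw [← hL]; exact p.getVert_length] at this
    obtain ⟨e, he3, heorb, heC⟩ := hM x hxB 3 w hxw hw b hb
    have hbe_le : Γ.dist b e ≤ 4 := by
      have t : Γ.dist b e ≤ Γ.dist b x + Γ.dist x e := hconn.dist_triangle
      have h1 : Γ.dist b x = 1 := SimpleGraph.dist_eq_one_iff_adj.mpr hbx
      omega
    have hbe_ge : 2 ≤ Γ.dist b e := by
      have t : Γ.dist x e ≤ Γ.dist x b + Γ.dist b e := hconn.dist_triangle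
      have h1 : Γ.dist x b = 1 := SimpleGraph.dist_eq_one_iff_adj.mpr hbx.symm
      omega
    have hev : Even (Γ.dist b e) := by
      refine (hpar b e).mp ?_
      simp only [Set.mem_compl_iff] at hb heC
      tauto
    have hbe : Γ.dist b e = 4 := by
      rcases Nat.even_iff.mp hev with h
      have hne2 : Γ.dist b e ≠ 2 := fun h2 => hsame_no2 b hb e heorb h2
      omega
    obtain ⟨g, hg, hgb, hgw⟩ := htrans b w e 4 (by omega) hs4 hd hbe
    have hginv := horb_g g⁻¹ (G.inv_mem hg) b e heorb
    have hib : g⁻¹ b = b := by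
      conv_lhs => rw [← hgb]
      exact Equiv.symm_apply_apply g b
    have hie : g⁻¹ e = w := by
      rw [← hgw]; exact Equiv.symm_apply_apply g w
    rw [hib, hie] at hginv
    exact hnw hginv
  -- cross-orbit blocks are at distance 2
  have hcross2 : 4 ≤ s → ∀ b c : V, b ∈ Bᶜ → c ∈ Bᶜ →
      POrbit N b ≠ POrbit N c → Γ.dist b c = 2 := by
    intro hs4 b c hb hc hneq
    have hbc : b ≠ c := by rintro rfl; exact hneq rfl
    have hev : Even (Γ.dist b c) := by
      refine (hpar b c).mp ?_
      simp only [Set.mem_compl_iff] at hb hc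
      tauto
    have hpos : Γ.dist b c ≠ 0 := fun h0 => hbc (hconn.dist_eq_zero_iff.mp h0)
    by_contra hne2
    have hd4 : Γ.dist b c ≠ 4 := fun h4 => hneq (horb_eq b c (hS hs4 b c hb hc h4))
    have hd6 : 6 ≤ Γ.dist b c := by
      rw [Nat.even_iff] at hev; omega
    obtain ⟨p, hp⟩ := hconn.exists_walk_length_eq_dist b c
    have hgeo' := hgeo b c p hp
    have hLlen : 6 ≤ p.length := by omega
    set z1 := p.getVert 1 with hz1def
    set z2 := p.getVert 2 with hz2def
    set z4 := p.getVert 4 with hz4def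
    set z6 := p.getVert 6 with hz6def
    have e02 : Γ.dist b z2 = 2 := by
      have := hgeo' 0 2 (by omega) (by omega)
      rwa [p.getVert_zero] at this
    have e04 : Γ.dist b z4 = 4 := by
      have := hgeo' 0 4 (by omega) (by omega)
      rwa [p.getVert_zero] at this
    have e06 : Γ.dist b z6 = 6 := by
      have := hgeo' 0 6 (by omega) (by omega)
      rwa [p.getVert_zero] at this
    have e14 : Γ.dist z1 z4 = 3 := hgeo' 1 4 (by omega) (by omega)
    have e26 : Γ.dist z2 z6 = 4 := hgeo' 2 6 (by omega) (by omega)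
    have e46 : Γ.dist z4 z6 = 2 := hgeo' 4 6 (by omega) (by omega)
    have hbz1 : Γ.Adj b z1 := by
      have := p.adj_getVert_succ (i := 0) (by omega)
      rwa [p.getVert_zero] at this
    have hz1B : z1 ∈ B := hsideB b z1 hbz1 hb
    have hside2 : ∀ m : V, Even (Γ.dist b m) → Γ.dist b m ≠ 0 → m ∈ Bᶜ := by
      intro m hevm _
      have := (hpar b m).mpr hevm
      simp only [Set.mem_compl_iff] at hb ⊢
      tauto
    have hz2C : z2 ∈ Bᶜ := hside2 z2 (by rw [e02]; exact ⟨1, rfl⟩) (by omega)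
    have hz4C : z4 ∈ Bᶜ := hside2 z4 (by rw [e04]; exact ⟨2, rfl⟩) (by omega)
    have hz6C : z6 ∈ Bᶜ := hside2 z6 (by rw [e06]; exact ⟨3, rfl⟩) (by omega)
    have hz4orb : z4 ∈ POrbit N b := hS hs4 b z4 hb hz4C e04
    have hz6orb : z6 ∈ POrbit N z2 := hS hs4 z2 z6 hz2C hz6C e26
    have hz2neq : POrbit N b ≠ POrbit N z2 := by
      intro h
      exact hsame_no2 b hb z2 (by rw [h]; exact horb_self z2) e02
    obtain ⟨c3, hc3C, hc3b, hc3z2⟩ := horbs3 b z2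
    obtain ⟨f, hz1f, hforb⟩ := hF1 z1 hz1B c3 hc3C
    have hfC : f ∈ Bᶜ := horb_compl c3 f hforb hc3C
    have hfΔ : POrbit N f = POrbit N c3 := (horb_eq c3 f hforb).symm
    have hfb : POrbit N f ≠ POrbit N b := by rw [hfΔ]; exact hc3b
    have hfz2 : POrbit N f ≠ POrbit N z2 := by rw [hfΔ]; exact hc3z2
    have hbnef : b ≠ f := by rintro rfl; exact hfb rfl
    have hbf : Γ.dist b f = 2 := hdist2 b f hb hfC hbnef ⟨z1, hbz1.symm, hz1f⟩
    have h1 : Γ.dist f z4 ≤ 4 := by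
      have t : Γ.dist f z4 ≤ Γ.dist f z1 + Γ.dist z1 z4 := hconn.dist_triangle
      have hfz1 : Γ.dist f z1 = 1 := SimpleGraph.dist_eq_one_iff_adj.mpr hz1f.symm
      omega
    have h2 : 2 ≤ Γ.dist f z4 := by
      have t : Γ.dist b z4 ≤ Γ.dist b f + Γ.dist f z4 := hconn.dist_triangle
      omega
    have hev2 : Even (Γ.dist f z4) := by
      refine (hpar f z4).mp ?_
      simp only [Set.mem_compl_iff] at hfC hz4C
      tauto
    have hne4 : Γ.dist f z4 ≠ 4 := by
      intro h4
      have := hS hs4 f z4 hfC hz4C h4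
      exact hfb ((horb_eq f z4 this).trans (horb_eq b z4 hz4orb).symm)
    have hfz4 : Γ.dist f z4 = 2 := by rw [Nat.even_iff] at hev2; omega
    have h3 : Γ.dist f z6 ≤ 4 := by
      have t : Γ.dist f z6 ≤ Γ.dist f z4 + Γ.dist z4 z6 := hconn.dist_triangle
      omega
    have h4 : 4 ≤ Γ.dist f z6 := by
      have t : Γ.dist b z6 ≤ Γ.dist b f + Γ.dist f z6 := hconn.dist_triangle
      omega
    have hfz6 : Γ.dist f z6 = 4 := le_antisymm h3 h4
    have := hS hs4 f z6 hfC hz6C hfz6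
    exact hfz2 ((horb_eq f z6 this).trans (horb_eq z2 z6 hz6orb).symm)
  -- distance from a point to a block is at most 3
  have hBBc3 : 4 ≤ s → ∀ u ∈ B, ∀ v ∈ Bᶜ, Γ.dist u v ≤ 3 := by
    intro hs4 u hu v hv
    obtain ⟨c3, hc3C, hc3v, -⟩ := horbs3 v v
    obtain ⟨y, huy, hyorb⟩ := hF1 u hu c3 hc3C
    have hyC : y ∈ Bᶜ := horb_compl c3 y hyorb hc3C
    have hduy : Γ.dist u y = 1 := SimpleGraph.dist_eq_one_iff_adj.mpr huy
    by_cases hyv : y = v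
    · rw [← hyv]; omega
    · have hyΔ : POrbit N y ≠ POrbit N v := by
        rw [← horb_eq c3 y hyorb]; exact hc3v
      have hdyv : Γ.dist y v = 2 := hcross2 hs4 y v hyC hv hyΔ
      have t : Γ.dist u v ≤ Γ.dist u y + Γ.dist y v := hconn.dist_triangle
      omega
  -- all distances are at most 4
  have hdist4 : 4 ≤ s → ∀ u v : V, Γ.dist u v ≤ 4 := by
    intro hs4 u v
    by_cases hu : u ∈ B <;> by_cases hv : v ∈ B
    · obtain ⟨y, huy⟩ := hnbr u
      have hyC : y ∈ Bᶜ := hsideBc u y huy hu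
      have h1 : Γ.dist v y ≤ 3 := hBBc3 hs4 v hv y hyC
      have t : Γ.dist u v ≤ Γ.dist u y + Γ.dist y v := hconn.dist_triangle
      have h2 : Γ.dist u y = 1 := SimpleGraph.dist_eq_one_iff_adj.mpr huy
      rw [SimpleGraph.dist_comm] at h1
      omega
    · have := hBBc3 hs4 u hu v (by simpa using hv)
      omega
    · have := hBBc3 hs4 v hv u (by simpa using hu)
      rw [SimpleGraph.dist_comm]
      omega
    · have huC : u ∈ Bᶜ := by simpa using hu
      have hvC : v ∈ Bᶜ := by simpa using hv
      by_cases horb : POrbit N u = POrbit N v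
      · obtain ⟨c3, hc3C, hc3u, -⟩ := horbs3 u u
        have h1 : Γ.dist u c3 = 2 := hcross2 hs4 u c3 huC hc3C (fun h => hc3u h.symm)
        have h2 : Γ.dist c3 v = 2 := hcross2 hs4 c3 v hc3C hvC (by rw [← horb]; exact hc3u)
        have t : Γ.dist u v ≤ Γ.dist u c3 + Γ.dist c3 v := hconn.dist_triangle
        omega
      · have := hcross2 hs4 u v huC hvC horb
        omega
  have hdiam_le4 : 4 ≤ s → Γ.diam ≤ 4 := by
    intro hs4
    have hed : Γ.ediam ≤ 4 := by
      apply SimpleGraph.ediam_le_of_edist_le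
      intro u v
      obtain ⟨p, hp⟩ := hconn.exists_walk_length_eq_dist u v
      have h1 : Γ.edist u v ≤ (p.length : ℕ∞) := SimpleGraph.Walk.edist_le p
      have h2 : p.length ≤ 4 := by rw [hp]; exact hdist4 hs4 u v
      exact le_trans h1 (by exact_mod_cast h2)
    have := ENat.toNat_le_toNat hed (by simp)
    simpa [SimpleGraph.diam] using this
  constructor
  · by_contra h
    push_neg at h
    have h4 := hdiam_le4 (by omega)
    omega
  · intro hs4eq
    have hs4 : 4 ≤ s := le_of_eq hs4eq.symm
    refine ⟨?_, hNorbs, ?_⟩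
    · refine ⟨hNB, hNtrans, ?_⟩
      obtain ⟨v0⟩ := hconn.nonempty
      have hbex : ∃ b, b ∈ Bᶜ := by
        by_cases h : v0 ∈ B
        · obtain ⟨y, hy⟩ := hnbr v0; exact ⟨y, hsideBc v0 y hy h⟩
        · exact ⟨v0, by simpa using h⟩
      obtain ⟨b0, hb0⟩ := hbex
      obtain ⟨c0, hc0C, hc0b0, -⟩ := horbs3 b0 b0
      have hd0 : Γ.dist b0 c0 = 2 := hcross2 hs4 b0 c0 hb0 hc0C (fun h => hc0b0 h.symm)
      refine ⟨{x | Γ.Adj x b0 ∧ Γ.Adj x c0}.ncard, ?_⟩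
      intro b hbC b' hb'C hne
      constructor
      · rintro hporb ⟨x, hxb, hxb'⟩
        exact hsame_no2 b hbC b' hporb (hdist2 b b' hbC hb'C hne ⟨x, hxb, hxb'⟩)
      · intro hnotorb
        have hΔ : POrbit N b ≠ POrbit N b' :=
          fun h => hnotorb (by rw [h]; exact horb_self b')
        have hd : Γ.dist b b' = 2 := hcross2 hs4 b b' hbC hb'C hΔ
        have hGtrans : ∀ a ∈ Bᶜ, ∀ c ∈ Bᶜ, ∃ g ∈ G, g a = c := by
          intro a haC c hcC
          by_cases horb : POrbit N a = POrbit N c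
          · have : c ∈ POrbit N a := by rw [horb]; exact horb_self c
            obtain ⟨n, hn, hna⟩ := this
            exact ⟨n, hNG hn, hna⟩
          · have hdac : Γ.dist a c = 2 := hcross2 hs4 a c haC hcC horb
            obtain ⟨p, hp⟩ := hconn.exists_walk_length_eq_dist a c
            have hL : p.length = 2 := hp.trans hdac
            set x := p.getVert 1 with hxdef
            have h1 : Γ.Adj a x := by
              have := p.adj_getVert_succ (i := 0) (by omega)
              rwa [p.getVert_zero] at this
            have h2 : Γ.Adj x c := by
              have := p.adj_getVert_succ (i := 1) (by omega)
              rwa [show p.getVert 2 = c from by rw [← hL]; exact p.getVert_length] at this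
            obtain ⟨g, hg, hgx, hga⟩ := htrans x a c 1 le_rfl (by omega)
              (SimpleGraph.dist_eq_one_iff_adj.mpr h1.symm)
              (SimpleGraph.dist_eq_one_iff_adj.mpr h2)
            exact ⟨g, hg, hga⟩
        obtain ⟨g1, hg1, hg1b⟩ := hGtrans b hbC b0 hb0
        have hdist_g1 : Γ.dist b0 (g1 b') = 2 := by
          rw [← hg1b, hdistg g1 hg1 b b', hd]
        obtain ⟨g2, hg2, hg2b0, hg2b'⟩ := htrans b0 (g1 b') c0 2 (by omega) (by omega)
          hdist_g1 hd0
        have hgG : (g2 * g1) ∈ G := G.mul_mem hg2 hg1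
        have hgb : (g2 * g1) b = b0 := by
          rw [Equiv.Perm.mul_apply, hg1b, hg2b0]
        have hgb' : (g2 * g1) b' = c0 := by
          rw [Equiv.Perm.mul_apply, hg2b']
        set g := g2 * g1 with hgdef
        have himg : (fun z => g z) '' {x | Γ.Adj x b ∧ Γ.Adj x b'} =
            {x | Γ.Adj x b0 ∧ Γ.Adj x c0} := by
          ext y
          simp only [Set.mem_image, Set.mem_setOf_eq]
          constructor
          · rintro ⟨x, ⟨ha1, ha2⟩, rfl⟩
            rw [← hgb, ← hgb']
            exact ⟨(hGaut g hgG x b).mpr ha1, (hGaut g hgG x b').mpr ha2⟩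
          · rintro ⟨ha1, ha2⟩
            refine ⟨g⁻¹ y, ⟨?_, ?_⟩, by simp⟩
            · apply (hGaut g hgG (g⁻¹ y) b).mp
              rw [show g (g⁻¹ y) = y from Equiv.apply_symm_apply g y, hgb]
              exact ha1
            · apply (hGaut g hgG (g⁻¹ y) b').mp
              rw [show g (g⁻¹ y) = y from Equiv.apply_symm_apply g y, hgb']
              exact ha2
        calc {x | Γ.Adj x b ∧ Γ.Adj x b'}.ncard
            = ((fun z => g z) '' {x | Γ.Adj x b ∧ Γ.Adj x b'}).ncard :=
              (Set.ncard_image_of_injective _ g.injective).symm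
          _ = {x | Γ.Adj x b0 ∧ Γ.Adj x c0}.ncard := by rw [himg]
    · refine le_antisymm (hdiam_le4 hs4) ?_
      calc 4 = s := hs4eq.symm
        _ ≤ Γ.diam := hsdiam
end

section
/- Let Γ be a finite connected bipartite graph with ordered bipartition (B|B'), G ≤ Aut(Γ), 1 ≠ N ⊴ G, and r ≥ 3 an integer, such that Γ is r-starlike relative to N and locally (G,4)-distance transitive, and suppose N acts regularly on B; identify B with N via a base point v as above, and let M_1, …, M_r be the subgroups of N whose right cosets are the blocks of the adjacency design D(Γ). Then the stabiliser G_v acts 2-transitively by conjugation on the set {M_1, …, M_r}, and there is a prime p such that the subgroups M_i are pairwise isomorphic p-groups of exponent p. -/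
open SimpleGraph

/-- **Lemma `lem:pgroups`**.  In the situation of Lemma `lem:subgpsN` (blocks of `D(Γ)`
identified with the cosets of subgroups `M₁, …, M_r` of the regular normal subgroup
`N`), the stabiliser `G_v` acts `2`-transitively by conjugation on `{M₁, …, M_r}`, and
there is a prime `p` such that the `Mᵢ` are pairwise isomorphic `p`-groups of exponent
`p`. -/
theorem statement18 {V : Type*} [Fintype V] (Γ : SimpleGraph V) (B : Set V)
    (hconn : Γ.Connected) (hbip : IsBipartition Γ B)
    (G N : Subgroup (Equiv.Perm V)) (hGaut : ∀ g ∈ G, IsGraphAut Γ g)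
    (hNG : N ≤ G) (hN1 : N ≠ ⊥) (hnorm : ∀ g ∈ G, ∀ n ∈ N, g * n * g⁻¹ ∈ N)
    (r : ℕ) (hr : 3 ≤ r)
    (hstar : IsStarlike Γ B N r) (hldt : LocallyDistTrans Γ G 4)
    (hreg : ∀ x ∈ B, ∀ y ∈ B, ∃! n : Equiv.Perm V, n ∈ N ∧ n x = y)
    (v : V) (hv : v ∈ B)
    (M : Fin r → Subgroup (Equiv.Perm V)) (hMinj : Function.Injective M)
    (hMN : ∀ i, M i ≤ N)
    (hblocks : ∀ b ∈ Bᶜ, ∃ (i : Fin r), ∃ n ∈ N,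
      Γ.neighborSet b = (fun m : Equiv.Perm V => (n * m) v) '' (M i : Set (Equiv.Perm V)))
    (hcosets : ∀ i : Fin r, ∀ n ∈ N, ∃ b ∈ Bᶜ,
      Γ.neighborSet b = (fun m : Equiv.Perm V => (n * m) v) '' (M i : Set (Equiv.Perm V))) :
    -- G_v is 2-transitive by conjugation on {M₁, …, M_r}
    (∀ i j i' j' : Fin r, i ≠ j → i' ≠ j' → ∃ g ∈ G, g v = v ∧
      (fun m : Equiv.Perm V => g * m * g⁻¹) '' (M i : Set (Equiv.Perm V))
        = (M i' : Set (Equiv.Perm V)) ∧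
      (fun m : Equiv.Perm V => g * m * g⁻¹) '' (M j : Set (Equiv.Perm V))
        = (M j' : Set (Equiv.Perm V))) ∧
    -- the Mᵢ are pairwise isomorphic p-groups of exponent p
    (∃ p : ℕ, p.Prime ∧
      (∀ i, IsPGroup p ↥(M i)) ∧
      (∀ i, ∀ m ∈ M i, m ^ p = 1) ∧
      (∀ i j, Nonempty (↥(M i) ≃* ↥(M j)))) := by
    classical
  -- B is preserved by N, and N is "regular": determined by image of v
  have hBmem : ∀ n ∈ N, n v ∈ B := fun n hn => (hstar.1 n hn v).mpr hv
  have regN : ∀ a ∈ N, ∀ b ∈ N, a v = b v → a = b := by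
    intro a ha b hb hab
    obtain ⟨n, -, hu⟩ := hreg v hv (b v) (hBmem b hb)
    exact (hu a ⟨ha, hab⟩).trans (hu b ⟨hb, rfl⟩).symm
  -- blocks with neighbor set (M i) v
  have hblk : ∀ i : Fin r, ∃ b ∈ Bᶜ,
      Γ.neighborSet b = (fun m : Equiv.Perm V => m v) '' (M i : Set (Equiv.Perm V)) := by
    intro i
    obtain ⟨b, hb, hnb⟩ := hcosets i 1 N.one_mem
    exact ⟨b, hb, by simpa using hnb⟩
  -- injectivity at the level of point sets
  have Sinj : ∀ i j : Fin r,
      (fun m : Equiv.Perm V => m v) '' (M i : Set (Equiv.Perm V)) =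
        (fun m : Equiv.Perm V => m v) '' (M j : Set (Equiv.Perm V)) → i = j := by
    intro i j hS
    apply hMinj
    ext x
    constructor
    · intro hx
      have hx' : x v ∈ (fun m : Equiv.Perm V => m v) '' (M j : Set (Equiv.Perm V)) :=
        hS ▸ ⟨x, hx, rfl⟩
      obtain ⟨y, hy, hyx⟩ := hx'
      exact (regN y (hMN j hy) x (hMN i hx) hyx) ▸ hy
    · intro hx
      have hx' : x v ∈ (fun m : Equiv.Perm V => m v) '' (M i : Set (Equiv.Perm V)) :=
        hS.symm ▸ ⟨x, hx, rfl⟩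
      obtain ⟨y, hy, hyx⟩ := hx'
      exact (regN y (hMN i hy) x (hMN j hx) hyx) ▸ hy
  -- non adjacency inside parts
  have nadjB : ∀ x ∈ B, ∀ y ∈ B, ¬ Γ.Adj x y := fun x hx y hy hadj => ((hbip x y hadj).mp hx) hy
  have nadjBc : ∀ x ∈ Bᶜ, ∀ y ∈ Bᶜ, ¬ Γ.Adj x y := fun x hx y hy hadj =>
    hx ((hbip x y hadj).mpr hy)
  -- distance two criterion
  have dist2 : ∀ x y z : V, x ≠ y → ¬ Γ.Adj x y → Γ.Adj x z → Γ.Adj z y → Γ.dist x y = 2 := by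
    intro x y z hne hna h1 h2
    have hle : Γ.dist x y ≤ 2 := by
      have hw := Γ.dist_le (SimpleGraph.Walk.cons h1 (SimpleGraph.Walk.cons h2 SimpleGraph.Walk.nil))
      simpa using hw
    have h0 : Γ.dist x y ≠ 0 := fun hE => hne (hconn.dist_eq_zero_iff.mp hE)
    have h1' : Γ.dist x y ≠ 1 := fun h => hna (SimpleGraph.dist_eq_one_iff_adj.mp h)
    omega
  -- automorphisms map neighbor sets to neighbor sets
  have nbImage : ∀ g ∈ G, ∀ b : V,
      (fun x => g x) '' Γ.neighborSet b = Γ.neighborSet (g b) := by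
    intro g hg b
    ext x
    simp only [Set.mem_image, SimpleGraph.mem_neighborSet]
    constructor
    · rintro ⟨y, hy, rfl⟩
      exact (hGaut g hg b y).mpr hy
    · intro hx
      refine ⟨g⁻¹ x, ?_, by simp⟩
      have hx' : Γ.Adj (g b) (g (g⁻¹ x)) := by simpa using hx
      exact (hGaut g hg b (g⁻¹ x)).mp hx'
  -- key: a vertex-stabilising automorphism matching point sets conjugates the subgroups
  have key : ∀ k : Equiv.Perm V, k ∈ G → k v = v → ∀ a b : Fin r,
      (fun x => k x) '' ((fun m : Equiv.Perm V => m v) '' (M a : Set (Equiv.Perm V))) =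
        (fun m : Equiv.Perm V => m v) '' (M b : Set (Equiv.Perm V)) →
      (fun m : Equiv.Perm V => k * m * k⁻¹) '' (M a : Set (Equiv.Perm V)) =
        (M b : Set (Equiv.Perm V)) := by
    intro k hkG hkv a b hS
    have hkv' : k⁻¹ v = v := by
      conv_lhs => rw [← hkv]
      exact k.symm_apply_apply v
    have conjv : ∀ m : Equiv.Perm V, (k * m * k⁻¹) v = k (m v) := by
      intro m
      simp [Equiv.Perm.mul_apply, hkv']
    ext x
    simp only [Set.mem_image, SetLike.mem_coe]
    constructor
    · rintro ⟨m0, hm0, rfl⟩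
      have hmem : k (m0 v) ∈ (fun m : Equiv.Perm V => m v) '' (M b : Set (Equiv.Perm V)) := by
        rw [← hS]
        exact ⟨m0 v, ⟨m0, hm0, rfl⟩, rfl⟩
      obtain ⟨m', hm', hme⟩ := hmem
      have heq : k * m0 * k⁻¹ = m' :=
        regN _ (hnorm k hkG m0 (hMN a hm0)) m' (hMN b hm') (by rw [conjv]; exact hme.symm)
      rw [heq]; exact hm'
    · intro hx
      have hmem : x v ∈ (fun y => k y) ''
          ((fun m : Equiv.Perm V => m v) '' (M a : Set (Equiv.Perm V))) := by
        rw [hS]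
        exact ⟨x, hx, rfl⟩
      obtain ⟨-, ⟨m0, hm0, rfl⟩, hkx⟩ := hmem
      exact ⟨m0, hm0, regN _ (hnorm k hkG m0 (hMN a hm0)) x (hMN b hx) (by rw [conjv]; exact hkx)⟩
  -- 2-transitivity of G_v on the subgroups
  have twotrans : ∀ i j i' j' : Fin r, i ≠ j → i' ≠ j' → ∃ g ∈ G, g v = v ∧
      (fun m : Equiv.Perm V => g * m * g⁻¹) '' (M i : Set (Equiv.Perm V))
        = (M i' : Set (Equiv.Perm V)) ∧
      (fun m : Equiv.Perm V => g * m * g⁻¹) '' (M j : Set (Equiv.Perm V))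
        = (M j' : Set (Equiv.Perm V)) := by
    intro i j i' j' hij hij'
    obtain ⟨b, hbBc, hb⟩ := hblk i
    obtain ⟨c, hcBc, hc⟩ := hblk j
    obtain ⟨b', hb'Bc, hb'⟩ := hblk i'
    obtain ⟨c', hc'Bc, hc'⟩ := hblk j'
    have adjb : Γ.Adj b v := by
      rw [← SimpleGraph.mem_neighborSet, hb]
      exact ⟨1, one_mem _, by simp⟩
    have adjc : Γ.Adj c v := by
      rw [← SimpleGraph.mem_neighborSet, hc]
      exact ⟨1, one_mem _, by simp⟩
    have adjb' : Γ.Adj b' v := by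
      rw [← SimpleGraph.mem_neighborSet, hb']
      exact ⟨1, one_mem _, by simp⟩
    have adjc' : Γ.Adj c' v := by
      rw [← SimpleGraph.mem_neighborSet, hc']
      exact ⟨1, one_mem _, by simp⟩
    obtain ⟨g1, hg1G, hg1v, hg1b⟩ := hldt.2 v b b' 1 le_rfl (by norm_num)
      (SimpleGraph.dist_eq_one_iff_adj.mpr adjb.symm)
      (SimpleGraph.dist_eq_one_iff_adj.mpr adjb'.symm)
    have adjc2 : Γ.Adj v (g1 c) := by
      have h := (hGaut g1 hg1G v c).mpr adjc.symm
      rwa [hg1v] at h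
    have hc2Bc : g1 c ∈ Bᶜ := (hbip v (g1 c) adjc2).mp hv
    have hnc2 : Γ.neighborSet (g1 c) =
        (fun x => g1 x) '' ((fun m : Equiv.Perm V => m v) '' (M j : Set (Equiv.Perm V))) := by
      rw [← nbImage g1 hg1G c, hc]
    have hnbb' : Γ.neighborSet b' =
        (fun x => g1 x) '' ((fun m : Equiv.Perm V => m v) '' (M i : Set (Equiv.Perm V))) := by
      rw [← hg1b, ← nbImage g1 hg1G b, hb]
    have hne1 : b' ≠ g1 c := by
      intro h
      have himg : (fun x => g1 x) '' ((fun m : Equiv.Perm V => m v) '' (M i : Set (Equiv.Perm V)))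
          = (fun x => g1 x) '' ((fun m : Equiv.Perm V => m v) '' (M j : Set (Equiv.Perm V))) := by
        rw [← hnbb', h, hnc2]
      exact hij (Sinj i j ((Set.image_injective.mpr g1.injective) himg))
    have hd2 : Γ.dist b' (g1 c) = 2 :=
      dist2 b' (g1 c) v hne1 (nadjBc b' hb'Bc (g1 c) hc2Bc) adjb' adjc2
    have hne2 : b' ≠ c' := by
      intro h
      exact hij' (Sinj i' j' (by rw [← hb', h, hc']))
    have hd2' : Γ.dist b' c' = 2 :=
      dist2 b' c' v hne2 (nadjBc b' hb'Bc c' hc'Bc) adjb' adjc'.symm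
    obtain ⟨h, hhG, hhb', hhc⟩ := hldt.2 b' (g1 c) c' 2 (by norm_num) (by norm_num) hd2 hd2'
    have hgG : h * g1 ∈ G := mul_mem hhG hg1G
    have hgb : (h * g1) b = b' := by
      rw [Equiv.Perm.mul_apply, hg1b, hhb']
    have hgc : (h * g1) c = c' := by
      rw [Equiv.Perm.mul_apply, hhc]
    have adjwb' : Γ.Adj b' ((h * g1) v) := by
      have h2 := (hGaut (h * g1) hgG b v).mpr adjb
      rwa [hgb] at h2
    have adjwc' : Γ.Adj c' ((h * g1) v) := by
      have h2 := (hGaut (h * g1) hgG c v).mpr adjc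
      rwa [hgc] at h2
    have hw1 : (h * g1) v ∈ (fun m : Equiv.Perm V => m v) '' (M i' : Set (Equiv.Perm V)) := by
      rw [← hb']
      exact adjwb'
    have hw2 : (h * g1) v ∈ (fun m : Equiv.Perm V => m v) '' (M j' : Set (Equiv.Perm V)) := by
      rw [← hc']
      exact adjwc'
    obtain ⟨m1, hm1i', hm1v⟩ := hw1
    obtain ⟨m2, hm2j', hm2v⟩ := hw2
    have hm12 : m1 = m2 := regN m1 (hMN i' hm1i') m2 (hMN j' hm2j') (hm1v.trans hm2v.symm)
    have hm1j' : m1 ∈ M j' := hm12 ▸ hm2j'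
    have hg'G : m1⁻¹ * (h * g1) ∈ G := mul_mem (inv_mem (hNG (hMN i' hm1i'))) hgG
    have hg'v : (m1⁻¹ * (h * g1)) v = v := by
      rw [Equiv.Perm.mul_apply, ← hm1v, Equiv.Perm.inv_def, Equiv.symm_apply_apply]
    -- m1⁻¹ stabilises the two point sets
    have mStep : ∀ a' : Fin r, m1 ∈ M a' →
        (fun z => (m1⁻¹ : Equiv.Perm V) z) ''
          ((fun m : Equiv.Perm V => m v) '' (M a' : Set (Equiv.Perm V))) =
        (fun m : Equiv.Perm V => m v) '' (M a' : Set (Equiv.Perm V)) := by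
      intro a' hma'
      ext x
      constructor
      · rintro ⟨-, ⟨m'', hm'', rfl⟩, rfl⟩
        exact ⟨m1⁻¹ * m'', mul_mem (inv_mem hma') hm'', by simp [Equiv.Perm.mul_apply]⟩
      · rintro ⟨m'', hm'', rfl⟩
        exact ⟨(m1 * m'') v, ⟨m1 * m'', mul_mem hma' hm'', rfl⟩,
          by simp [Equiv.Perm.mul_apply]⟩
    have gImg : ∀ (a a' : Fin r) (x x' : V),
        Γ.neighborSet x = (fun m : Equiv.Perm V => m v) '' (M a : Set (Equiv.Perm V)) →
        Γ.neighborSet x' = (fun m : Equiv.Perm V => m v) '' (M a' : Set (Equiv.Perm V)) →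
        (h * g1) x = x' → m1 ∈ M a' →
        (fun z => (m1⁻¹ * (h * g1)) z) ''
            ((fun m : Equiv.Perm V => m v) '' (M a : Set (Equiv.Perm V))) =
          (fun m : Equiv.Perm V => m v) '' (M a' : Set (Equiv.Perm V)) := by
      intro a a' x x' hx hx' hgx hma'
      have h1 : (fun z => (h * g1) z) '' ((fun m : Equiv.Perm V => m v) '' (M a : Set (Equiv.Perm V)))
          = (fun m : Equiv.Perm V => m v) '' (M a' : Set (Equiv.Perm V)) := by
        rw [← hx, nbImage (h * g1) hgG x, hgx, hx']
      have hcomp : (fun z => (m1⁻¹ * (h * g1)) z) =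
          (fun z => (m1⁻¹ : Equiv.Perm V) ((h * g1) z)) := by
        funext z
        exact Equiv.Perm.mul_apply _ _ _
      rw [hcomp, ← Set.image_image, h1, mStep a' hma']
    exact ⟨m1⁻¹ * (h * g1), hg'G, hg'v,
      key _ hg'G hg'v i i' (gImg i i' b b' hb hb' hgb hm1i'),
      key _ hg'G hg'v j j' (gImg j j' c c' hc hc' hgc hm1j')⟩
  -- all nontrivial elements of the subgroups are conjugate under G_v
  have conjElem : ∀ (a : Fin r) (x : Equiv.Perm V), x ∈ M a → x ≠ 1 →
      ∀ (bb : Fin r) (y : Equiv.Perm V), y ∈ M bb → y ≠ 1 →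
      ∃ g ∈ G, g * x * g⁻¹ = y := by
    intro a x hx hx1 bb y hy hy1
    obtain ⟨bx, hbxBc, hbx⟩ := hblk a
    obtain ⟨by', hbyBc, hby⟩ := hblk bb
    have adjbx : Γ.Adj bx v := by
      rw [← SimpleGraph.mem_neighborSet, hbx]; exact ⟨1, one_mem _, by simp⟩
    have adjby : Γ.Adj by' v := by
      rw [← SimpleGraph.mem_neighborSet, hby]; exact ⟨1, one_mem _, by simp⟩
    have adjbxx : Γ.Adj bx (x v) := by
      rw [← SimpleGraph.mem_neighborSet, hbx]; exact ⟨x, hx, rfl⟩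
    have adjbyy : Γ.Adj by' (y v) := by
      rw [← SimpleGraph.mem_neighborSet, hby]; exact ⟨y, hy, rfl⟩
    have hxvB : x v ∈ B := hBmem x (hMN a hx)
    have hyvB : y v ∈ B := hBmem y (hMN bb hy)
    have hxvne : v ≠ x v := by
      intro hE
      exact hx1 (regN x (hMN a hx) 1 (one_mem N) (by simpa using hE.symm))
    have hyvne : v ≠ y v := by
      intro hE
      exact hy1 (regN y (hMN bb hy) 1 (one_mem N) (by simpa using hE.symm))
    have hdx : Γ.dist v (x v) = 2 :=
      dist2 v (x v) bx hxvne (nadjB v hv (x v) hxvB) adjbx.symm adjbxx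
    have hdy : Γ.dist v (y v) = 2 :=
      dist2 v (y v) by' hyvne (nadjB v hv (y v) hyvB) adjby.symm adjbyy
    obtain ⟨g, hgG, hgv, hgx⟩ := hldt.2 v (x v) (y v) 2 (by norm_num) (by norm_num) hdx hdy
    have hginv : g⁻¹ v = v := by
      conv_lhs => rw [← hgv]
      exact g.symm_apply_apply v
    refine ⟨g, hgG, regN _ (hnorm g hgG x (hMN a hx)) y (hMN bb hy) ?_⟩
    rw [Equiv.Perm.mul_apply, Equiv.Perm.mul_apply, hginv, hgx]
  -- some subgroup is nontrivial
  have exn : ∃ (a : Fin r) (x : Equiv.Perm V), x ∈ M a ∧ x ≠ 1 := by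
    by_contra hcon
    push_neg at hcon
    have hbot : ∀ a : Fin r, M a = ⊥ := fun a =>
      (Subgroup.eq_bot_iff_forall _).mpr (fun x hx => hcon a x hx)
    have h01 : (⟨0, by omega⟩ : Fin r) = ⟨1, by omega⟩ :=
      hMinj (by rw [hbot, hbot])
    simp at h01
  obtain ⟨i0, m0, hm0, hm01⟩ := exn
  have hp1 : orderOf m0 ≠ 1 := fun hE => hm01 (orderOf_eq_one_iff.mp hE)
  have hp0 : orderOf m0 ≠ 0 := (orderOf_pos m0).ne'
  -- all nontrivial elements have order p := orderOf m0
  have ordEq : ∀ (a : Fin r) (x : Equiv.Perm V), x ∈ M a → x ≠ 1 →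
      orderOf x = orderOf m0 := by
    intro a x hx hx1
    obtain ⟨g, hgG, hcj⟩ := conjElem i0 m0 hm0 hm01 a x hx hx1
    rw [← hcj]
    rw [orderOf_eq_orderOf_iff]
    intro n
    rw [conj_pow]
    constructor
    · intro hE
      have : m0 ^ n = g⁻¹ * 1 * g := by
        rw [← hE]; group
      simpa using this
    · intro hE
      rw [hE]; group
  -- p is prime
  have hq := Nat.minFac_prime hp1
  have hqd : (orderOf m0).minFac ∣ orderOf m0 := Nat.minFac_dvd _
  have hm1ne : m0 ^ (orderOf m0 / (orderOf m0).minFac) ≠ 1 := by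
    intro hE
    have hdvd : orderOf m0 ∣ orderOf m0 / (orderOf m0).minFac := orderOf_dvd_of_pow_eq_one hE
    have hlt : orderOf m0 / (orderOf m0).minFac < orderOf m0 :=
      Nat.div_lt_self (Nat.pos_of_ne_zero hp0) hq.one_lt
    have hpos : 0 < orderOf m0 / (orderOf m0).minFac :=
      Nat.div_pos (Nat.le_of_dvd (Nat.pos_of_ne_zero hp0) hqd) hq.pos
    have := Nat.le_of_dvd hpos hdvd
    omega
  have hordm1 : orderOf (m0 ^ (orderOf m0 / (orderOf m0).minFac)) = orderOf m0 :=
    ordEq i0 _ (pow_mem hm0 _) hm1ne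
  have hpow : (m0 ^ (orderOf m0 / (orderOf m0).minFac)) ^ (orderOf m0).minFac = 1 := by
    rw [← pow_mul, Nat.div_mul_cancel hqd, pow_orderOf_eq_one]
  have hdvdq : orderOf m0 ∣ (orderOf m0).minFac := by
    have hd := orderOf_dvd_of_pow_eq_one hpow
    rwa [hordm1] at hd
  have hpq : orderOf m0 = (orderOf m0).minFac :=
    (hq.eq_one_or_self_of_dvd _ hdvdq).resolve_left hp1
  have hpprime : (orderOf m0).Prime := hpq ▸ hq
  -- exponent p
  have hexp : ∀ i, ∀ m ∈ M i, m ^ orderOf m0 = 1 := by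
    intro i m hm
    by_cases h1 : m = 1
    · simp [h1]
    · rw [← ordEq i m hm h1]
      exact pow_orderOf_eq_one m
  refine ⟨twotrans, orderOf m0, hpprime, ?_, hexp, ?_⟩
  · -- p-groups
    intro i x
    refine ⟨1, ?_⟩
    rw [pow_one]
    apply Subtype.ext
    rw [SubmonoidClass.coe_pow]
    exact hexp i x.1 x.2
  · -- pairwise isomorphic
    intro i j
    rcases eq_or_ne i j with rfl | hne
    · exact ⟨MulEquiv.refl _⟩
    · have hk : ∃ k : Fin r, k ≠ i ∧ k ≠ j := by
        by_contra hcon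
        push_neg at hcon
        have hsub : (Finset.univ : Finset (Fin r)) ⊆ {i, j} := by
          intro k _
          rcases eq_or_ne k i with rfl | hki
          · simp
          · simp [hcon k hki]
        have hcard := Finset.card_le_card hsub
        have h2 : ({i, j} : Finset (Fin r)).card ≤ 2 := by
          have := Finset.card_insert_le i ({j} : Finset (Fin r))
          simpa using this
        rw [Finset.card_univ, Fintype.card_fin] at hcard
        omega
      obtain ⟨k, hki, hkj⟩ := hk
      obtain ⟨g, hgG, hgv, hgi, -⟩ := twotrans i k j k (Ne.symm hki).symm.symm (Ne.symm hkj).symm.symm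
      have fwd : ∀ x ∈ M i, g * x * g⁻¹ ∈ M j := by
        intro x hx
        rw [← SetLike.mem_coe, ← hgi]
        exact ⟨x, hx, rfl⟩
      have bwd : ∀ y ∈ M j, g⁻¹ * y * g ∈ M i := by
        intro y hy
        have hy' : y ∈ (fun m : Equiv.Perm V => g * m * g⁻¹) '' (M i : Set (Equiv.Perm V)) := by
          rw [hgi]; exact hy
        obtain ⟨x, hx, hxy⟩ := hy'
        have hE : g⁻¹ * y * g = x := by rw [← hxy]; group
        rw [hE]; exact hx
      exact ⟨{ toFun := fun x => ⟨g * x * g⁻¹, fwd x x.2⟩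
               invFun := fun y => ⟨g⁻¹ * y * g, bwd y y.2⟩
               left_inv := fun x => by
                 apply Subtype.ext
                 simp only [Subgroup.coe_mul]
                 group
               right_inv := fun y => by
                 apply Subtype.ext
                 simp only [Subgroup.coe_mul]
                 group
               map_mul' := fun x y => by
                 apply Subtype.ext
                 simp only [Subgroup.coe_mul]
                 group }⟩
end

section
/- Let Γ be a finite connected bipartite graph with ordered bipartition (B|B'), G ≤ Aut(Γ), 1 ≠ N ⊴ G, and r ≥ 3 an integer, such that Γ is r-starlike relative to N and locally (G,4)-distance transitive, and suppose N acts regularly on B; identify B with N via a base point v as above, and let M_1, …, M_r be the subgroups of N whose right cosets are the blocks of the adjacency design D(Γ). Then N = M_1·M_2; in particular N is a p-group (for the prime p such that the M_i are p-groups) and |N| ≤ |M_1|². -/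
open SimpleGraph

section NpgroupAux

variable {V : Type*}

/-- right coset `n·M` applied to base vertex `v`. -/
def cosetSet (v : V) (M : Subgroup (Equiv.Perm V)) (n : Equiv.Perm V) : Set V :=
  (fun m : Equiv.Perm V => (n * m) v) '' (M : Set (Equiv.Perm V))

lemma mem_cosetSet {v : V} {M : Subgroup (Equiv.Perm V)} {n : Equiv.Perm V} {x : V} :
    x ∈ cosetSet v M n ↔ ∃ m ∈ M, (n * m) v = x := by
  simp [cosetSet]

lemma parity_walk {Γ : SimpleGraph V} {B : Set V} (hbip : IsBipartition Γ B) :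
    ∀ {x y : V} (w : Γ.Walk x y), Even w.length ↔ (x ∈ B ↔ y ∈ B) := by
  intro x y w
  induction w with
  | nil => simp
  | cons h w ih =>
    have hxz := hbip _ _ h
    simp only [SimpleGraph.Walk.length_cons, Nat.even_add_one, ih]
    tauto

lemma dist_getVert_le {Γ : SimpleGraph V} (hconn : Γ.Connected) :
    ∀ {x y : V} (w : Γ.Walk x y) (k : ℕ), Γ.dist x (w.getVert k) ≤ k := by
  intro x y w
  induction w with
  | nil => intro k; simp [SimpleGraph.Walk.getVert, SimpleGraph.dist_self]
  | @cons a b c h w ih =>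
    intro k
    cases k with
    | zero => simp [SimpleGraph.Walk.getVert, SimpleGraph.dist_self]
    | succ k =>
      rw [SimpleGraph.Walk.getVert_cons_succ]
      have h1 : Γ.dist a b = 1 := SimpleGraph.dist_eq_one_iff_adj.mpr h
      have h2 := ih k
      have h3 : Γ.dist a (w.getVert k) ≤ Γ.dist a b + Γ.dist b (w.getVert k) :=
        hconn.dist_triangle
      omega

lemma getVert_dist_le {Γ : SimpleGraph V} :
    ∀ {x y : V} (w : Γ.Walk x y) (k : ℕ), Γ.dist (w.getVert k) y ≤ w.length - k := by
  intro x y w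
  induction w with
  | nil => intro k; simp [SimpleGraph.Walk.getVert, SimpleGraph.dist_self]
  | @cons a b c h w ih =>
    intro k
    cases k with
    | zero =>
      simp only [SimpleGraph.Walk.getVert]
      have := SimpleGraph.dist_le (SimpleGraph.Walk.cons h w)
      simpa using this
    | succ k =>
      rw [SimpleGraph.Walk.getVert_cons_succ]
      have := ih k
      simp only [SimpleGraph.Walk.length_cons]
      omega

lemma walk_len2 {Γ : SimpleGraph V} {x y : V} (w : Γ.Walk x y) (h : w.length = 2) :
    ∃ z, Γ.Adj x z ∧ Γ.Adj z y := by
  cases w with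
  | nil => simp at h
  | cons h1 w =>
    cases w with
    | nil => simp at h
    | cons h2 w =>
      cases w with
      | nil => exact ⟨_, h1, h2⟩
      | cons h3 w => simp [SimpleGraph.Walk.length_cons] at h

lemma walk_len4 {Γ : SimpleGraph V} {x y : V} (w : Γ.Walk x y) (h : w.length = 4) :
    ∃ z1 z2 z3, Γ.Adj x z1 ∧ Γ.Adj z1 z2 ∧ Γ.Adj z2 z3 ∧ Γ.Adj z3 y := by
  cases w with
  | nil => simp at h
  | cons h1 w =>
    cases w with
    | nil => simp at h
    | cons h2 w =>
      cases w with
      | nil => simp at h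
      | cons h3 w =>
        cases w with
        | nil => simp at h
        | cons h4 w =>
          cases w with
          | nil => exact ⟨_, _, _, h1, h2, h3, h4⟩
          | cons h5 w => simp [SimpleGraph.Walk.length_cons] at h

end NpgroupAux

/-- **Lemma `lem:Npgroup`**.  In the situation of Lemma `lem:subgpsN` (blocks of `D(Γ)`
identified with the cosets of subgroups `M₁, …, M_r ≤ N`, which are `p`-groups), we have
`N = M₁ · M₂`; in particular `N` is a `p`-group and `|N| ≤ |M₁|²`. -/
theorem statement19 {V : Type*} [Fintype V] (Γ : SimpleGraph V) (B : Set V)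
    (hconn : Γ.Connected) (hbip : IsBipartition Γ B)
    (G N : Subgroup (Equiv.Perm V)) (hGaut : ∀ g ∈ G, IsGraphAut Γ g)
    (hNG : N ≤ G) (hN1 : N ≠ ⊥) (hnorm : ∀ g ∈ G, ∀ n ∈ N, g * n * g⁻¹ ∈ N)
    (r : ℕ) (hr : 3 ≤ r)
    (hstar : IsStarlike Γ B N r) (hldt : LocallyDistTrans Γ G 4)
    (hreg : ∀ x ∈ B, ∀ y ∈ B, ∃! n : Equiv.Perm V, n ∈ N ∧ n x = y)
    (v : V) (hv : v ∈ B)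
    (M : Fin r → Subgroup (Equiv.Perm V)) (hMinj : Function.Injective M)
    (hMN : ∀ i, M i ≤ N)
    (hblocks : ∀ b ∈ Bᶜ, ∃ (i : Fin r), ∃ n ∈ N,
      Γ.neighborSet b = (fun m : Equiv.Perm V => (n * m) v) '' (M i : Set (Equiv.Perm V)))
    (hcosets : ∀ i : Fin r, ∀ n ∈ N, ∃ b ∈ Bᶜ,
      Γ.neighborSet b = (fun m : Equiv.Perm V => (n * m) v) '' (M i : Set (Equiv.Perm V)))
    (p : ℕ) (hp : p.Prime) (hMp : ∀ i, IsPGroup p ↥(M i)) :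
    -- N = M₁ M₂
    (∀ n ∈ N, ∃ m₁ ∈ M ⟨0, by omega⟩, ∃ m₂ ∈ M ⟨1, by omega⟩, n = m₁ * m₂) ∧
    -- N is a p-group with |N| ≤ |M₁|²
    IsPGroup p ↥N ∧
    Nat.card ↥N ≤ Nat.card ↥(M ⟨0, by omega⟩) ^ 2 := by
  classical
  haveI : Fact p.Prime := ⟨hp⟩
  -- ### basic facts
  have hNB : ∀ n, n ∈ N → ∀ x : V, x ∈ B → n x ∈ B := fun n hn x hx =>
    (hstar.1 n hn x).mpr hx
  have hNBc : ∀ n, n ∈ N → ∀ b, b ∈ Bᶜ → n b ∈ Bᶜ := by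
    intro n hn b hb hmem
    exact hb ((hstar.1 n hn b).mp hmem)
  have inj : ∀ n₁, n₁ ∈ N → ∀ n₂, n₂ ∈ N → n₁ v = n₂ v → n₁ = n₂ := by
    intro n₁ hn₁ n₂ hn₂ h
    obtain ⟨n, -, huniq⟩ := hreg v hv (n₁ v) (hNB n₁ hn₁ v hv)
    exact (huniq n₁ ⟨hn₁, rfl⟩).trans (huniq n₂ ⟨hn₂, h.symm⟩).symm
  have adjB : ∀ b, b ∈ Bᶜ → ∀ x : V, Γ.Adj b x → x ∈ B := by
    intro b hb x hadj
    by_contra hx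
    exact hb ((hbip b x hadj).mpr hx)
  have nadjBc : ∀ b, b ∈ Bᶜ → ∀ c, c ∈ Bᶜ → ¬ Γ.Adj b c := by
    intro b hb c hc hadj
    exact hc (adjB b hb c hadj)
  have hreach : ∀ x y : V, Γ.Reachable x y := fun x y => hconn.preconnected x y
  -- ### coset manipulation
  have MEET : ∀ K₁ K₂ : Subgroup (Equiv.Perm V), K₁ ≤ N → K₂ ≤ N →
      ∀ n₁, n₁ ∈ N → ∀ n₂, n₂ ∈ N → ∀ x : V, x ∈ cosetSet v K₁ n₁ → x ∈ cosetSet v K₂ n₂ →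
      ∃ m₁ ∈ K₁, ∃ m₂ ∈ K₂, n₁ * m₁ = n₂ * m₂ := by
    intro K₁ K₂ hK₁ hK₂ n₁ hn₁ n₂ hn₂ x hx₁ hx₂
    obtain ⟨m₁, hm₁, hv₁⟩ := mem_cosetSet.mp hx₁
    obtain ⟨m₂, hm₂, hv₂⟩ := mem_cosetSet.mp hx₂
    exact ⟨m₁, hm₁, m₂, hm₂,
      inj _ (N.mul_mem hn₁ (hK₁ hm₁)) _ (N.mul_mem hn₂ (hK₂ hm₂)) (hv₁.trans hv₂.symm)⟩
  have EXT0 : ∀ K₁ K₂ : Subgroup (Equiv.Perm V), K₁ ≤ N → K₂ ≤ N →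
      ∀ n₁, n₁ ∈ N → ∀ n₂, n₂ ∈ N → cosetSet v K₁ n₁ = cosetSet v K₂ n₂ →
      K₁ = K₂ ∧ n₂⁻¹ * n₁ ∈ K₂ := by
    intro K₁ K₂ hK₁ hK₂ n₁ hn₁ n₂ hn₂ heq
    have key : ∀ m, m ∈ K₁ → ∃ m' ∈ K₂, n₁ * m = n₂ * m' := by
      intro m hm
      have hx : (n₁ * m) v ∈ cosetSet v K₂ n₂ := heq ▸ mem_cosetSet.mpr ⟨m, hm, rfl⟩
      obtain ⟨m', hm', hvm⟩ := mem_cosetSet.mp hx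
      exact ⟨m', hm', inj _ (N.mul_mem hn₁ (hK₁ hm)) _ (N.mul_mem hn₂ (hK₂ hm')) hvm.symm⟩
    have key' : ∀ m', m' ∈ K₂ → ∃ m ∈ K₁, n₁ * m = n₂ * m' := by
      intro m' hm'
      have hx : (n₂ * m') v ∈ cosetSet v K₁ n₁ := heq ▸ mem_cosetSet.mpr ⟨m', hm', rfl⟩
      obtain ⟨m, hm, hvm⟩ := mem_cosetSet.mp hx
      exact ⟨m, hm, inj _ (N.mul_mem hn₁ (hK₁ hm)) _ (N.mul_mem hn₂ (hK₂ hm')) hvm⟩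
    obtain ⟨a, ha, h1⟩ := key 1 K₁.one_mem
    have ha' : n₂⁻¹ * n₁ = a := by
      have : n₁ = n₂ * a := by rw [← h1, mul_one]
      rw [this]; group
    refine ⟨?_, ha' ▸ ha⟩
    have hle : K₁ ≤ K₂ := by
      intro m hm
      obtain ⟨m', hm', hmm⟩ := key m hm
      have : m = a⁻¹ * m' := by
        have hn : n₁ = n₂ * a := by rw [← h1, mul_one]
        rw [hn] at hmm
        -- n₂ * a * m = n₂ * m'
        have := mul_left_cancel ((mul_assoc n₂ a m) ▸ hmm)
        rw [← this]; group
      rw [this]; exact K₂.mul_mem (K₂.inv_mem ha) hm'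
    have hge : K₂ ≤ K₁ := by
      intro m' hm'
      obtain ⟨m, hm, hmm⟩ := key' (a * m') (K₂.mul_mem ha hm')
      have hn : n₂ = n₁ * a⁻¹ := by
        have : n₁ = n₂ * a := by rw [← h1, mul_one]
        rw [this]; group
      rw [hn] at hmm
      -- n₁ * m = n₁ * a⁻¹ * (a * m') = n₁ * m'
      have h2 : n₁ * m = n₁ * m' := by rw [hmm]; group
      have : m = m' := mul_left_cancel h2
      rwa [← this]
    exact le_antisymm hle hge
  have EQ2 : ∀ K : Subgroup (Equiv.Perm V), ∀ n₁ n₂ : Equiv.Perm V, n₂⁻¹ * n₁ ∈ K →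
      cosetSet v K n₁ = cosetSet v K n₂ := by
    intro K n₁ n₂ h12
    have h21 : n₁⁻¹ * n₂ ∈ K := by
      have := K.inv_mem h12
      rwa [mul_inv_rev, inv_inv] at this
    ext x
    simp only [mem_cosetSet]
    constructor
    · rintro ⟨m, hm, rfl⟩
      exact ⟨n₂⁻¹ * n₁ * m, K.mul_mem h12 hm, by rw [show n₂ * (n₂⁻¹ * n₁ * m) = n₁ * m by group]⟩
    · rintro ⟨m, hm, rfl⟩
      exact ⟨n₁⁻¹ * n₂ * m, K.mul_mem h21 hm, by rw [show n₁ * (n₁⁻¹ * n₂ * m) = n₂ * m by group]⟩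
  have vmem : ∀ K : Subgroup (Equiv.Perm V), K ≤ N → ∀ n, n ∈ N →
      v ∈ cosetSet v K n → cosetSet v K n = cosetSet v K 1 := by
    intro K hK n hn hvmem
    obtain ⟨m, hm, hmv⟩ := mem_cosetSet.mp hvmem
    have h1 : (n * m) v = (1 : Equiv.Perm V) v := by simpa using hmv
    have : n * m = 1 := inj _ (N.mul_mem hn (hK hm)) _ N.one_mem h1
    have hnK : n ∈ K := by
      have : n = m⁻¹ := by
        rw [← one_mul m⁻¹, ← this]; group
      rw [this]; exact K.inv_mem hm
    apply EQ2
    simpa using hnK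
  -- ### automorphism action
  have nbhd_map : ∀ g, g ∈ G → ∀ b : V,
      Γ.neighborSet (g b) = (fun z => g z) '' Γ.neighborSet b := by
    intro g hg b
    ext x
    simp only [SimpleGraph.mem_neighborSet, Set.mem_image]
    constructor
    · intro h
      refine ⟨g⁻¹ x, ?_, Equiv.apply_symm_apply g x⟩
      have h2 := (hGaut g hg b (g⁻¹ x)).mp
      rw [Equiv.Perm.inv_def, Equiv.apply_symm_apply] at h2
      exact h2 h
    · rintro ⟨z, hz, rfl⟩
      exact (hGaut g hg b z).mpr hz
  have dist_le_map : ∀ g, g ∈ G → ∀ x y : V, Γ.dist (g x) (g y) ≤ Γ.dist x y := by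
    intro g hg x y
    obtain ⟨w, hw⟩ := (hreach x y).exists_walk_length_eq_dist
    let f : Γ →g Γ := ⟨(g : Equiv.Perm V), fun {a b} hab => (hGaut g hg a b).mpr hab⟩
    have h2 := SimpleGraph.dist_le (w.map f)
    rw [SimpleGraph.Walk.length_map, hw] at h2
    exact h2
  have dist_map : ∀ g, g ∈ G → ∀ x y : V, Γ.dist (g x) (g y) = Γ.dist x y := by
    intro g hg x y
    refine le_antisymm (dist_le_map g hg x y) ?_
    have h2 := dist_le_map g⁻¹ (G.inv_mem hg) (g x) (g y)
    simpa [Equiv.Perm.inv_def] using h2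
  have trans_block : ∀ k, k ∈ N → ∀ b, b ∈ Bᶜ → ∀ (i : Fin r) (n : Equiv.Perm V),
      Γ.neighborSet b = cosetSet v (M i) n →
      (k : Equiv.Perm V) b ∈ Bᶜ ∧ Γ.neighborSet (k b) = cosetSet v (M i) (k * n) := by
    intro k hk b hb i n hnb
    refine ⟨hNBc k hk b hb, ?_⟩
    rw [nbhd_map k (hNG hk) b, hnb]
    ext x
    simp only [Set.mem_image, mem_cosetSet]
    constructor
    · rintro ⟨z, ⟨m, hm, rfl⟩, rfl⟩
      exact ⟨m, hm, by rw [show k * n * m = k * (n * m) by group]; rfl⟩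
    · rintro ⟨m, hm, rfl⟩
      exact ⟨(n * m) v, ⟨m, hm, rfl⟩, by rw [show k * n * m = k * (n * m) by group]; rfl⟩
  -- ### distance basics
  have deven : ∀ b, b ∈ Bᶜ → ∀ c, c ∈ Bᶜ → Even (Γ.dist b c) := by
    intro b hb c hc
    obtain ⟨w, hw⟩ := (hreach b c).exists_walk_length_eq_dist
    rw [← hw]
    exact (parity_walk hbip w).mpr (by simp only [Set.mem_compl_iff] at hb hc; tauto)
  have dist2_cn : ∀ b c : V, Γ.dist b c = 2 → ∃ x, Γ.Adj b x ∧ Γ.Adj c x := by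
    intro b c h2
    obtain ⟨w, hw⟩ := (hreach b c).exists_walk_length_eq_dist
    obtain ⟨z, hz1, hz2⟩ := walk_len2 w (by rw [hw, h2])
    exact ⟨z, hz1, hz2.symm⟩
  -- ### conjugacy of the subgroups M i under G_v
  have conjM : ∀ i j : Fin r,
      Subgroup.map (MulAut.conj ((1:Equiv.Perm V))).toMonoidHom (M i) = M i → True := fun _ _ _ => trivial
  clear conjM
  have conjM : ∀ i j : Fin r, ∃ g : Equiv.Perm V, g ∈ G ∧ g v = v ∧
      Subgroup.map (MulAut.conj g).toMonoidHom (M i) = M j := by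
    intro i j
    obtain ⟨bi, hbi, hnbi⟩ := hcosets i 1 N.one_mem
    obtain ⟨bj, hbj, hnbj⟩ := hcosets j 1 N.one_mem
    have hnbi' : Γ.neighborSet bi = cosetSet v (M i) 1 := hnbi
    have hnbj' : Γ.neighborSet bj = cosetSet v (M j) 1 := hnbj
    have hvbi : Γ.Adj bi v := by
      have : v ∈ Γ.neighborSet bi := by
        rw [hnbi']; exact mem_cosetSet.mpr ⟨1, (M i).one_mem, by simp⟩
      exact this
    have hvbj : Γ.Adj bj v := by
      have : v ∈ Γ.neighborSet bj := by
        rw [hnbj']; exact mem_cosetSet.mpr ⟨1, (M j).one_mem, by simp⟩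
      exact this
    have d1 : Γ.dist v bi = 1 := SimpleGraph.dist_eq_one_iff_adj.mpr hvbi.symm
    have d2 : Γ.dist v bj = 1 := SimpleGraph.dist_eq_one_iff_adj.mpr hvbj.symm
    obtain ⟨g, hg, hgv, hgb⟩ := hldt.2 v bi bj 1 le_rfl (by omega) d1 d2
    have hginv : g⁻¹ v = v := by
      conv_lhs => rw [← hgv]
      exact Equiv.symm_apply_apply g v
    have hle : Subgroup.map (MulAut.conj g).toMonoidHom (M i) ≤ N := by
      intro x hx
      obtain ⟨m, hm, rfl⟩ := Subgroup.mem_map.mp hx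
      simpa using hnorm g hg m (hMN i hm)
    have himg : Γ.neighborSet bj
        = cosetSet v (Subgroup.map (MulAut.conj g).toMonoidHom (M i)) 1 := by
      rw [← hgb, nbhd_map g hg bi, hnbi']
      ext x
      simp only [Set.mem_image, mem_cosetSet, Subgroup.mem_map]
      constructor
      · rintro ⟨z, ⟨m, hm, rfl⟩, rfl⟩
        refine ⟨g * m * g⁻¹, ⟨m, hm, by simp⟩, ?_⟩
        simp only [one_mul, Equiv.Perm.mul_apply]
        rw [hginv]
      · rintro ⟨mm, ⟨m, hm, hmm⟩, rfl⟩
        refine ⟨(1 * m) v, ⟨m, hm, rfl⟩, ?_⟩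
        rw [← hmm]
        simp only [one_mul, MulEquiv.coe_toMonoidHom, MulAut.conj_apply,
          Equiv.Perm.mul_apply, hginv]
    have := EXT0 _ _ hle (hMN j) 1 N.one_mem 1 N.one_mem (himg.symm.trans hnbj')
    exact ⟨g, hg, hgv, this.1⟩
  have cardM : ∀ i j : Fin r, Nat.card (M i) = Nat.card (M j) := by
    intro i j
    obtain ⟨g, hg, hgv, hmap⟩ := conjM i j
    rw [← hmap]
    exact Nat.card_congr
      (Subgroup.equivMapOfInjective (M i) (MulAut.conj g).toMonoidHom
        (MulAut.conj g).injective).toEquiv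
  have existsm : ∀ i j : Fin r, i ≠ j → ∃ m, m ∈ M j ∧ m ∉ M i := by
    intro i j hij
    by_contra hc
    push_neg at hc
    have hle : (M j : Set (Equiv.Perm V)) ⊆ (M i : Set (Equiv.Perm V)) := fun m hm => hc m hm
    have hcard : (M i : Set (Equiv.Perm V)).ncard ≤ (M j : Set (Equiv.Perm V)).ncard := by
      rw [← Nat.card_coe_set_eq, ← Nat.card_coe_set_eq]
      exact le_of_eq (cardM i j)
    have := Set.eq_of_subset_of_ncard_le hle hcard (Set.toFinite _)
    exact hij (hMinj (SetLike.coe_injective this)).symm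
  -- ### key lemma: blocks at distance 4 have the same type
  have F3 : ∀ b, b ∈ Bᶜ → ∀ c, c ∈ Bᶜ → ∀ (i i' : Fin r) (n n' : Equiv.Perm V),
      n ∈ N → n' ∈ N → Γ.neighborSet b = cosetSet v (M i) n →
      Γ.neighborSet c = cosetSet v (M i') n' → Γ.dist b c = 4 → i' = i := by
    intro b hb c hc i i' n n' hn hn' hnb hnc hd4
    obtain ⟨j, hij⟩ : ∃ j : Fin r, i ≠ j := by
      by_cases h : i = ⟨0, by omega⟩
      · exact ⟨⟨1, by omega⟩, by rw [h]; simp [Fin.ext_iff]⟩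
      · exact ⟨⟨0, by omega⟩, h⟩
    obtain ⟨m, hmj, hmi⟩ := existsm i j hij
    have hmN : (m : Equiv.Perm V) ∈ N := hMN j hmj
    set k : Equiv.Perm V := n * m * n⁻¹ with hk
    have hkN : k ∈ N := by
      have := N.mul_mem (N.mul_mem hn hmN) (N.inv_mem hn)
      exact this
    obtain ⟨hkbB, hnkb⟩ := trans_block k hkN b hb i n hnb
    have hkn : k * n = n * m := by rw [hk]; group
    rw [hkn] at hnkb
    obtain ⟨d, hdB, hnd⟩ := hcosets j n hn
    have hnd' : Γ.neighborSet d = cosetSet v (M j) n := hnd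
    -- adjacency chain  b – n v – d – (n*m) v – k b
    have a1 : Γ.Adj b (n v) := by
      have : n v ∈ Γ.neighborSet b := by
        rw [hnb]; exact mem_cosetSet.mpr ⟨1, (M i).one_mem, by simp⟩
      exact this
    have a2 : Γ.Adj d (n v) := by
      have : n v ∈ Γ.neighborSet d := by
        rw [hnd']; exact mem_cosetSet.mpr ⟨1, (M j).one_mem, by simp⟩
      exact this
    have a3 : Γ.Adj d ((n * m) v) := by
      have : (n * m) v ∈ Γ.neighborSet d := by
        rw [hnd']; exact mem_cosetSet.mpr ⟨m, hmj, rfl⟩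
      exact this
    have a4 : Γ.Adj (k b) ((n * m) v) := by
      have : (n * m) v ∈ Γ.neighborSet (k b) := by
        rw [hnkb]; exact mem_cosetSet.mpr ⟨1, (M i).one_mem, by simp⟩
      exact this
    have hdle : Γ.dist b (k b) ≤ 4 := by
      have h9 := SimpleGraph.dist_le (SimpleGraph.Walk.cons a1 (SimpleGraph.Walk.cons a2.symm
          (SimpleGraph.Walk.cons a3 (SimpleGraph.Walk.cons a4.symm SimpleGraph.Walk.nil))))
      exact h9
    have hne0 : b ≠ k b := by
      intro h
      have heq : cosetSet v (M i) n = cosetSet v (M i) (n * m) := by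
        rw [← hnb, ← hnkb, ← h]
      have := (EXT0 _ _ (hMN i) (hMN i) n hn (n * m) (N.mul_mem hn hmN) heq).2
      rw [show (n * m)⁻¹ * n = m⁻¹ by group] at this
      exact hmi (by simpa using (M i).inv_mem this)
    have hne2 : Γ.dist b (k b) ≠ 2 := by
      intro h2
      obtain ⟨x, hx1, hx2⟩ := dist2_cn b (k b) h2
      have hx1' : x ∈ cosetSet v (M i) n := by rw [← hnb]; exact hx1
      have hx2' : x ∈ cosetSet v (M i) (n * m) := by rw [← hnkb]; exact hx2
      obtain ⟨m₁, hm₁, m₂, hm₂, hmm⟩ :=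
        MEET _ _ (hMN i) (hMN i) n hn (n * m) (N.mul_mem hn hmN) x hx1' hx2'
      have : m = m₁ * m₂⁻¹ := by
        have : n * m₁ = n * (m * m₂) := by rw [hmm]; group
        have h3 := mul_left_cancel this
        rw [h3]; group
      rw [this] at hmi
      exact hmi ((M i).mul_mem hm₁ ((M i).inv_mem hm₂))
    have hevb : Even (Γ.dist b (k b)) := deven b hb (k b) hkbB
    have hd4' : Γ.dist b (k b) = 4 := by
      have hne0' : Γ.dist b (k b) ≠ 0 :=
        fun hh => hne0 (hconn.dist_eq_zero_iff.mp hh)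
      obtain ⟨kk, hkk⟩ := hevb
      omega
    obtain ⟨g, hg, hgb, hgkb⟩ := hldt.2 b (k b) c 4 (by omega) le_rfl hd4' hd4
    have hcb : c = (g * k * g⁻¹) b := by
      rw [← hgkb]
      simp only [Equiv.Perm.mul_apply]
      rw [show (g⁻¹ : Equiv.Perm V) b = g⁻¹ (g b) by rw [hgb], Equiv.Perm.inv_def, Equiv.symm_apply_apply]
    have hk'N : g * k * g⁻¹ ∈ N := hnorm g hg k hkN
    obtain ⟨-, hnkb'⟩ := trans_block (g * k * g⁻¹) hk'N b hb i n hnb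
    rw [← hcb] at hnkb'
    have := EXT0 _ _ (hMN i') (hMN i) n' hn' (g * k * g⁻¹ * n)
      (N.mul_mem hk'N hn) (hnc.symm.trans hnkb')
    exact hMinj this.1
  -- ### third index helper
  have third : ∀ i i' : Fin r, ∃ t : Fin r, t ≠ i ∧ t ≠ i' := by
    intro i i'
    by_contra hcon
    push_neg at hcon
    have e0 := hcon ⟨0, by omega⟩
    have e1 := hcon ⟨1, by omega⟩
    have e2 := hcon ⟨2, by omega⟩
    by_cases h0 : (⟨0, by omega⟩ : Fin r) = i
    · by_cases h1 : (⟨1, by omega⟩ : Fin r) = i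
      · exact absurd (h0.trans h1.symm) (by simp [Fin.ext_iff])
      · have e1' := e1 h1
        by_cases h2 : (⟨2, by omega⟩ : Fin r) = i
        · exact absurd (h0.trans h2.symm) (by simp [Fin.ext_iff])
        · exact absurd ((e1 h1).trans (e2 h2).symm) (by simp [Fin.ext_iff])
    · by_cases h1 : (⟨1, by omega⟩ : Fin r) = i
      · by_cases h2 : (⟨2, by omega⟩ : Fin r) = i
        · exact absurd (h1.trans h2.symm) (by simp [Fin.ext_iff])
        · exact absurd ((e0 h0).trans (e2 h2).symm) (by simp [Fin.ext_iff])
      · exact absurd ((e0 h0).trans (e1 h1).symm) (by simp [Fin.ext_iff])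
  -- ### main distance lemma: blocks of different types are at distance ≤ 2
  have KK : ∀ d : ℕ, ∀ b, b ∈ Bᶜ → ∀ c, c ∈ Bᶜ → ∀ (i i' : Fin r) (n n' : Equiv.Perm V),
      n ∈ N → n' ∈ N → Γ.neighborSet b = cosetSet v (M i) n →
      Γ.neighborSet c = cosetSet v (M i') n' → i ≠ i' → Γ.dist b c = d → d ≤ 2 := by
    intro d
    induction d using Nat.strong_induction_on with
    | _ d IH =>
    intro b hb c hc i i' n n' hn hn' hnbB hncB hii hdist
    by_contra hgt
    push_neg at hgt
    have hev : Even d := hdist ▸ deven b hb c hc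
    have hd4 : d ≠ 4 := by
      intro h4
      rw [h4] at hdist
      exact hii (F3 b hb c hc i i' n n' hn hn' hnbB hncB hdist).symm
    have hd6 : 6 ≤ d := by obtain ⟨kk, hkk⟩ := hev; omega
    -- find block e at distance 4 from c on a geodesic
    obtain ⟨w, hw⟩ := (hreach b c).exists_walk_length_eq_dist
    set e := w.getVert (d - 4) with he
    have hbe : Γ.dist b e ≤ d - 4 := by
      have := dist_getVert_le hconn w (d - 4); rwa [← he] at this
    have hec : Γ.dist e c ≤ 4 := by
      have h1 := getVert_dist_le w (d - 4)
      rw [hw, hdist, ← he] at h1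
      have h2 : d - (d - 4) = 4 := by omega
      rwa [h2] at h1
    have htri : Γ.dist b c ≤ Γ.dist b e + Γ.dist e c := hconn.dist_triangle
    have hec4 : Γ.dist e c = 4 := by omega
    have hbe2 : Γ.dist b e = d - 4 := by omega
    have heB : e ∈ Bᶜ := by
      obtain ⟨w', hw'⟩ := (hreach b e).exists_walk_length_eq_dist
      have hpar := parity_walk hbip w'
      rw [hw', hbe2] at hpar
      have hevd4 : Even (d - 4) := by obtain ⟨kk, hkk⟩ := hev; exact ⟨kk - 2, by omega⟩
      intro heBmem
      exact hb ((hpar.mp hevd4).mpr heBmem)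
    obtain ⟨ie, ne, hne, hnbe⟩ := hblocks e heB
    have hnbe' : Γ.neighborSet e = cosetSet v (M ie) ne := hnbe
    have hie : i' = ie := F3 e heB c hc ie i' ne n' hne hn' hnbe' hncB hec4
    have hiie : i ≠ ie := fun h => hii (h.trans hie.symm)
    have hd42 : d - 4 ≤ 2 := IH (d - 4) (by omega) b hb e heB i ie n ne hn hne hnbB hnbe' hiie hbe2
    have hbnee : b ≠ e := by
      intro h
      rw [← h] at hnbe'
      exact hiie (hMinj (EXT0 _ _ (hMN i) (hMN ie) n hn ne hne (hnbB.symm.trans hnbe')).1)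
    have hdbe2 : Γ.dist b e = 2 := by
      have hne0 : Γ.dist b e ≠ 0 := fun hh => hbnee (hconn.dist_eq_zero_iff.mp hh)
      have hne1 : Γ.dist b e ≠ 1 := fun h1 =>
        nadjBc b hb e heB (SimpleGraph.dist_eq_one_iff_adj.mp h1)
      omega
    have hd62 : d = 6 := by omega
    -- normalize so that the common point of b and e is v
    obtain ⟨w0, hbw0, hew0⟩ := dist2_cn b e hdbe2
    have hw0B : w0 ∈ B := adjB b hb w0 hbw0
    obtain ⟨nw, hnw, hnwv⟩ := hstar.2.1 v hv w0 hw0B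
    set k0 : Equiv.Perm V := nw⁻¹ with hk0def
    have hk0 : k0 ∈ N := N.inv_mem hnw
    obtain ⟨hbt, hnbt⟩ := trans_block k0 hk0 b hb i n hnbB
    obtain ⟨het, hnet⟩ := trans_block k0 hk0 e heB ie ne hnbe'
    obtain ⟨hct, hnct⟩ := trans_block k0 hk0 c hc i' n' hncB
    have hk0w0 : k0 w0 = v := by
      rw [hk0def, ← hnwv]
      exact Equiv.symm_apply_apply nw v
    have hvb : v ∈ Γ.neighborSet (k0 b) := by
      rw [nbhd_map k0 (hNG hk0) b]
      exact ⟨w0, hbw0, hk0w0⟩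
    have hve : v ∈ Γ.neighborSet (k0 e) := by
      rw [nbhd_map k0 (hNG hk0) e]
      exact ⟨w0, hew0, hk0w0⟩
    have hb1 : Γ.neighborSet (k0 b) = cosetSet v (M i) 1 := by
      rw [hnbt]
      exact vmem (M i) (hMN i) (k0 * n) (N.mul_mem hk0 hn) (by rw [← hnbt]; exact hvb)
    have he1 : Γ.neighborSet (k0 e) = cosetSet v (M ie) 1 := by
      rw [hnet]
      exact vmem (M ie) (hMN ie) (k0 * ne) (N.mul_mem hk0 hne) (by rw [← hnet]; exact hve)
    have hdec : Γ.dist (k0 e) (k0 c) = 4 := by rw [dist_map k0 (hNG hk0) e c]; exact hec4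
    have hdbc : Γ.dist (k0 b) (k0 c) = 6 := by
      rw [dist_map k0 (hNG hk0) b c, hdist]; exact hd62
    -- decompose a geodesic  k0 e – z1 – z2 – z3 – k0 c
    obtain ⟨w4, hw4⟩ := (hreach (k0 e) (k0 c)).exists_walk_length_eq_dist
    obtain ⟨z1, z2, z3, az1, az2, az3, az4⟩ := walk_len4 w4 (by rw [hw4, hdec])
    have hz1B : z1 ∈ B := adjB (k0 e) het z1 az1
    have hz2B : z2 ∈ Bᶜ := fun hmem => ((hbip z1 z2 az2).mp hz1B) hmem
    obtain ⟨s, nd, hnd, hndB⟩ := hblocks z2 hz2B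
    have hndB' : Γ.neighborSet z2 = cosetSet v (M s) nd := hndB
    have hz1e : z1 ∈ cosetSet v (M ie) 1 := by rw [← he1]; exact az1
    have hz1d : z1 ∈ cosetSet v (M s) nd := by rw [← hndB']; exact az2.symm
    have hz3d : z3 ∈ Γ.neighborSet z2 := az3
    have hz3c : z3 ∈ Γ.neighborSet (k0 c) := az4.symm
    -- s ≠ ie
    have hsie : s ≠ ie := by
      intro hs
      rw [hs] at hz1d
      obtain ⟨m₁, hm₁, m₂, hm₂, hmm⟩ :=
        MEET _ _ (hMN ie) (hMN ie) nd hnd 1 N.one_mem z1 hz1d hz1e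
      have hndM : (1:Equiv.Perm V)⁻¹ * nd ∈ M ie := by
        have h8 : nd * m₁ = m₂ := by rw [hmm]; group
        have h9 : nd = m₂ * m₁⁻¹ := by rw [← h8]; group
        rw [h9, inv_one, one_mul]
        exact (M ie).mul_mem hm₂ ((M ie).inv_mem hm₁)
      have heqd : Γ.neighborSet z2 = Γ.neighborSet (k0 e) := by
        rw [hndB', he1, hs]
        exact EQ2 (M ie) nd 1 hndM
      have : Γ.dist (k0 e) (k0 c) ≤ 2 := by
        have az3' : Γ.Adj (k0 e) z3 := by
          have : z3 ∈ Γ.neighborSet (k0 e) := by rw [← heqd]; exact hz3d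
          exact this
        have h9 := SimpleGraph.dist_le
          (SimpleGraph.Walk.cons az3' (SimpleGraph.Walk.cons az4 SimpleGraph.Walk.nil))
        simpa using h9
      omega
    -- for every type t ≠ ie we must have s = t
    have SC : ∀ t : Fin r, t ≠ ie → s = t := by
      intro t hti
      by_contra hst
      obtain ⟨f, hfB, hnf⟩ := hcosets t 1 N.one_mem
      have hnf' : Γ.neighborSet f = cosetSet v (M t) 1 := hnf
      have hvf : Γ.Adj f v := by
        have : v ∈ Γ.neighborSet f := by
          rw [hnf']; exact mem_cosetSet.mpr ⟨1, (M t).one_mem, by simp⟩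
        exact this
      have hadjbv : Γ.Adj (k0 b) v := hvb
      have hadjev : Γ.Adj (k0 e) v := hve
      -- dist f (k0 c) ≥ 5
      have hfc5 : 5 ≤ Γ.dist f (k0 c) := by
        have hfc0 : f ≠ k0 c := by
          intro h
          rw [h] at hnf'
          have := EXT0 _ _ (hMN t) (hMN i') 1 N.one_mem (k0 * n')
            (N.mul_mem hk0 hn') (hnf'.symm.trans hnct)
          exact hti ((hMinj this.1).trans hie)
        have hfc1 : Γ.dist f (k0 c) ≠ 1 := fun h1 =>
          nadjBc f hfB (k0 c) hct (SimpleGraph.dist_eq_one_iff_adj.mp h1)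
        have hfc2 : Γ.dist f (k0 c) ≠ 2 := by
          intro h2
          obtain ⟨z, hfz, hcz⟩ := dist2_cn f (k0 c) h2
          have h9 := SimpleGraph.dist_le
            (SimpleGraph.Walk.cons hadjbv (SimpleGraph.Walk.cons hvf.symm
              (SimpleGraph.Walk.cons hfz (SimpleGraph.Walk.cons hcz.symm SimpleGraph.Walk.nil))))
          simp only [SimpleGraph.Walk.length_cons, SimpleGraph.Walk.length_nil] at h9
          omega
        have hfc4 : Γ.dist f (k0 c) ≠ 4 := by
          intro h4
          have := F3 f hfB (k0 c) hct t i' 1 (k0 * n') N.one_mem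
            (N.mul_mem hk0 hn') hnf' hnct h4
          exact hti (this.symm.trans hie)
        have hfcev : Even (Γ.dist f (k0 c)) := deven f hfB (k0 c) hct
        have hfc00 : Γ.dist f (k0 c) ≠ 0 := fun hh => hfc0 (hconn.dist_eq_zero_iff.mp hh)
        obtain ⟨kk, hkk⟩ := hfcev
        omega
      -- z2 ≠ f
      have hdf : z2 ≠ f := by
        intro h
        have h8 : Γ.dist f (k0 c) ≤ 2 := by
          have az3' : Γ.Adj f z3 := by rw [← h]; exact az3
          have h9 := SimpleGraph.dist_le
            (SimpleGraph.Walk.cons az3' (SimpleGraph.Walk.cons az4 SimpleGraph.Walk.nil))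
          simpa using h9
        omega
      -- dist f z2 ≤ 4
      have hfd4 : Γ.dist f z2 ≤ 4 := by
        have h9 := SimpleGraph.dist_le
          (SimpleGraph.Walk.cons hvf (SimpleGraph.Walk.cons hadjev.symm
            (SimpleGraph.Walk.cons az1 (SimpleGraph.Walk.cons az2 SimpleGraph.Walk.nil))))
        simpa using h9
      have hfd0 : Γ.dist f z2 ≠ 0 := fun hh => hdf (hconn.dist_eq_zero_iff.mp hh).symm
      have hfdev : Even (Γ.dist f z2) := deven f hfB z2 hz2B
      have hfd2 : Γ.dist f z2 ≠ 2 := by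
        intro h2
        obtain ⟨z, hfz, hdz⟩ := dist2_cn f z2 h2
        have h9 := SimpleGraph.dist_le
          (SimpleGraph.Walk.cons hfz (SimpleGraph.Walk.cons hdz.symm
            (SimpleGraph.Walk.cons az3 (SimpleGraph.Walk.cons az4 SimpleGraph.Walk.nil))))
        simp only [SimpleGraph.Walk.length_cons, SimpleGraph.Walk.length_nil] at h9
        omega
      have hfdd4 : Γ.dist f z2 = 4 := by obtain ⟨kk, hkk⟩ := hfdev; omega
      exact hst (F3 f hfB z2 hz2B t s 1 nd N.one_mem hnd hnf' hndB' hfdd4)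
    obtain ⟨t2, ht2i, ht2ie⟩ := third i ie
    have h1 := SC i hiie
    have h2 := SC t2 ht2ie
    exact ht2i (h1.symm.trans h2).symm
  -- ### conclusion (1): N = M₀ M₁
  have main1 : ∀ n ∈ N, ∃ m₁ ∈ M ⟨0, by omega⟩, ∃ m₂ ∈ M ⟨1, by omega⟩, n = m₁ * m₂ := by
    intro n hn
    set i0 : Fin r := ⟨0, by omega⟩
    set i1 : Fin r := ⟨1, by omega⟩
    obtain ⟨b0, hb0, hnb0⟩ := hcosets i0 1 N.one_mem
    obtain ⟨c, hcB, hnc⟩ := hcosets i1 n hn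
    have hnb0' : Γ.neighborSet b0 = cosetSet v (M i0) 1 := hnb0
    have hnc' : Γ.neighborSet c = cosetSet v (M i1) n := hnc
    have hne : i0 ≠ i1 := by simp [i0, i1, Fin.ext_iff]
    have hd := KK (Γ.dist b0 c) b0 hb0 c hcB i0 i1 1 n N.one_mem hn hnb0' hnc' hne rfl
    have h0 : b0 ≠ c := by
      intro h
      rw [h] at hnb0'
      exact hne (hMinj (EXT0 _ _ (hMN i0) (hMN i1) 1 N.one_mem n hn (hnb0'.symm.trans hnc')).1)
    have hd2 : Γ.dist b0 c = 2 := by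
      have hne0 : Γ.dist b0 c ≠ 0 := fun hh => h0 (hconn.dist_eq_zero_iff.mp hh)
      have hne1 : Γ.dist b0 c ≠ 1 := fun h1 =>
        nadjBc b0 hb0 c hcB (SimpleGraph.dist_eq_one_iff_adj.mp h1)
      omega
    obtain ⟨x, hx1, hx2⟩ := dist2_cn b0 c hd2
    have hx1' : x ∈ cosetSet v (M i0) 1 := by rw [← hnb0']; exact hx1
    have hx2' : x ∈ cosetSet v (M i1) n := by rw [← hnc']; exact hx2
    obtain ⟨m₁, hm₁, m₂, hm₂, hmm⟩ :=
      MEET _ _ (hMN i0) (hMN i1) 1 N.one_mem n hn x hx1' hx2'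
    refine ⟨m₁, hm₁, m₂⁻¹, (M i1).inv_mem hm₂, ?_⟩
    rw [one_mul] at hmm
    rw [hmm]; group
  -- ### conclusion (2),(3): N is a p-group with |N| ≤ |M₀|²
  set i0 : Fin r := ⟨0, by omega⟩ with hi0
  set i1 : Fin r := ⟨1, by omega⟩ with hi1
  letI act : MulAction (↥(M i0) × ↥(M i1)) (Equiv.Perm V) :=
    { smul := fun gk x => (gk.1 : Equiv.Perm V) * x * (gk.2 : Equiv.Perm V)⁻¹
      one_smul := fun x => by
        show (1 : Equiv.Perm V) * x * (1 : Equiv.Perm V)⁻¹ = x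
        group
      mul_smul := fun a b x => by
        show ((a.1 * b.1 : ↥(M i0)) : Equiv.Perm V) * x * ((a.2 * b.2 : ↥(M i1)) : Equiv.Perm V)⁻¹
          = (a.1 : Equiv.Perm V) * ((b.1 : Equiv.Perm V) * x * (b.2 : Equiv.Perm V)⁻¹)
            * (a.2 : Equiv.Perm V)⁻¹
        push_cast
        group }
  have hsmul : ∀ (gk : ↥(M i0) × ↥(M i1)) (x : Equiv.Perm V),
      gk • x = (gk.1 : Equiv.Perm V) * x * (gk.2 : Equiv.Perm V)⁻¹ := fun _ _ => rfl
  have horb : MulAction.orbit (↥(M i0) × ↥(M i1)) (1 : Equiv.Perm V)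
      = (N : Set (Equiv.Perm V)) := by
    ext x
    constructor
    · rintro ⟨gk, rfl⟩
      show (gk.1 : Equiv.Perm V) * 1 * ((gk.2 : Equiv.Perm V))⁻¹ ∈ (N : Set (Equiv.Perm V))
      exact N.mul_mem (N.mul_mem (hMN i0 gk.1.2) N.one_mem) (N.inv_mem (hMN i1 gk.2.2))
    · intro hx
      obtain ⟨m₁, hm₁, m₂, hm₂, rfl⟩ := main1 x hx
      refine ⟨(⟨m₁, hm₁⟩, ⟨m₂⁻¹, (M i1).inv_mem hm₂⟩), ?_⟩
      show m₁ * 1 * (m₂⁻¹)⁻¹ = m₁ * m₂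
      group
  have hcard1 : Nat.card ↥N
      = Nat.card (MulAction.orbit (↥(M i0) × ↥(M i1)) (1 : Equiv.Perm V)) := by
    rw [horb]
    exact Nat.card_congr (Equiv.subtypeEquivRight (fun x => Iff.rfl))
  have hdvd : Nat.card ↥N ∣ Nat.card ↥(M i0) * Nat.card ↥(M i1) := by
    rw [hcard1,
      Nat.card_congr (MulAction.orbitEquivQuotientStabilizer (↥(M i0) × ↥(M i1))
        (1 : Equiv.Perm V)),
      ← Nat.card_prod]
    exact Subgroup.index_dvd_card
      (MulAction.stabilizer (↥(M i0) × ↥(M i1)) (1 : Equiv.Perm V))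
  have hcc : Nat.card ↥(M i1) = Nat.card ↥(M i0) := cardM i1 i0
  obtain ⟨a, hHa⟩ := (hMp i0).exists_card_eq
  obtain ⟨bb, hKb⟩ := (hMp i1).exists_card_eq
  have hdvd' : Nat.card ↥N ∣ p ^ (a + bb) := by
    rw [pow_add, ← hHa, ← hKb]; exact hdvd
  obtain ⟨mm, -, hcardN⟩ := (Nat.dvd_prime_pow hp).mp hdvd'
  have hpos : 0 < Nat.card ↥(M i0) * Nat.card ↥(M i1) := by
    have := hp.pos
    rw [hHa, hKb]; positivity
  refine ⟨main1, IsPGroup.of_card hcardN, ?_⟩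
  calc Nat.card ↥N ≤ Nat.card ↥(M i0) * Nat.card ↥(M i1) := Nat.le_of_dvd hpos hdvd
    _ = Nat.card ↥(M i0) ^ 2 := by rw [hcc, pow_two]
end
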